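/- arXiv:1705.07686 — 6 statements merged into one kernel-verified Lean document; each statement's English description precedes it below -/
import Mathlib

section
/- Let S be a schema and let σ be a prefix of a terminating path through S (σ ∈ pre(Π(S))). Then the set {m ∈ L(S) : σm ∈ pre(Π(S))} is one of the following: a singleton containing a label, a singleton containing an assignment letter ⟨y:=f(x)⟩, a pair {⟨p(x),true⟩, ⟨p(x),false⟩} for a predicate p of S, or the empty set; and if σ ∈ Π(S) then this set is empty. -/
namespace SchemaSlicing

/- Function symbols, predicate symbols, variables and labels are drawn from
   fixed infinite sets; we model each by ℕ. Arities are implicit: each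
   occurrence of a symbol carries the list of its arguments. -/
abbrev Var := ℕ
abbrev Fn := ℕ
abbrev Pn := ℕ
abbrev Label := ℕ

/-- Structured program schemas. `loop` is the while-construct. -/
inductive Schema : Type where
  | skip : Schema
  | label : Label → Schema
  | assign : Var → Fn → List Var → Schema
  | seq : Schema → Schema → Schema
  | ite : Pn → List Var → Schema → Schema → Schema
  | loop : Pn → List Var → Schema → Schema
  deriving DecidableEq

/-- Letters of the alphabet L(S): labels, assignment letters ⟨y:=f(x)⟩ and
    predicate letters ⟨p(x),Z⟩. -/
inductive Letter : Type where
  | lab : Label → Letter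
  | asgn : Var → Fn → List Var → Letter
  | pred : Pn → List Var → Bool → Letter
  deriving DecidableEq

/-- Symbols: function symbols, predicate symbols and labels. -/
inductive Sym : Type where
  | fn : Fn → Sym
  | pn : Pn → Sym
  | lab : Label → Sym
  deriving DecidableEq

/-- The list of occurrences of function symbols, predicate symbols and labels in a schema. -/
def Schema.syms : Schema → List Sym
  | .skip => []
  | .label l => [Sym.lab l]
  | .assign _ f _ => [Sym.fn f]
  | .seq S₁ S₂ => S₁.syms ++ S₂.syms
  | .ite p _ S₁ S₂ => Sym.pn p :: (S₁.syms ++ S₂.syms)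
  | .loop q _ T => Sym.pn q :: T.syms

/-- A schema is linear if no function symbol, predicate symbol or label occurs
    more than once in it. -/
def Schema.Linear (S : Schema) : Prop := S.syms.Nodup

/-- Π(S), the set of terminating paths through S. -/
inductive Paths : Schema → List Letter → Prop where
  | skip : Paths Schema.skip []
  | label (l : Label) : Paths (Schema.label l) [Letter.lab l]
  | assign (y : Var) (f : Fn) (xs : List Var) :
      Paths (Schema.assign y f xs) [Letter.asgn y f xs]
  | seq {S₁ S₂ w₁ w₂} : Paths S₁ w₁ → Paths S₂ w₂ → Paths (Schema.seq S₁ S₂) (w₁ ++ w₂)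
  | iteTrue {p xs S₁ S₂ w} : Paths S₁ w →
      Paths (Schema.ite p xs S₁ S₂) (Letter.pred p xs true :: w)
  | iteFalse {p xs S₁ S₂ w} : Paths S₂ w →
      Paths (Schema.ite p xs S₁ S₂) (Letter.pred p xs false :: w)
  | loopFalse (q : Pn) (xs : List Var) (T : Schema) :
      Paths (Schema.loop q xs T) [Letter.pred q xs false]
  | loopTrue {q xs T w ws} : Paths T w → Paths (Schema.loop q xs T) ws →
      Paths (Schema.loop q xs T) (Letter.pred q xs true :: (w ++ ws))

/-- ρ ∈ pre(Π(S)): ρ is a (finite) path through S.  (Every finite path through S,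
    including every finite prefix of an infinite path, is a prefix of a terminating path.) -/
def PathPrefix (S : Schema) (ρ : List Letter) : Prop := ∃ τ, Paths S τ ∧ ρ <+: τ

/-- `IsQuotient S' S`: S' is obtained from S by deleting zero or more statements. -/
inductive IsQuotient : Schema → Schema → Prop where
  | skip (S : Schema) : IsQuotient Schema.skip S
  | refl (S : Schema) : IsQuotient S S
  | seq {S₁' S₁ S₂' S₂} : IsQuotient S₁' S₁ → IsQuotient S₂' S₂ →
      IsQuotient (Schema.seq S₁' S₂') (Schema.seq S₁ S₂)
  | loop {q xs T' T} : IsQuotient T' T → IsQuotient (Schema.loop q xs T') (Schema.loop q xs T)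
  | ite {p xs T₁ S₁ T₂ S₂} : IsQuotient T₁ S₁ → IsQuotient T₂ S₂ →
      IsQuotient (Schema.ite p xs T₁ T₂) (Schema.ite p xs S₁ S₂)

/-- The symbol (function symbol, predicate symbol or label) of a letter. -/
def Letter.sym : Letter → Sym
  | .lab l => Sym.lab l
  | .asgn _ f _ => Sym.fn f
  | .pred p _ _ => Sym.pn p

/-- proj_{S'}(ρ): delete from ρ all letters whose function or predicate symbols,
    or labels, do not occur in S'. -/
def proj (S' : Schema) (ρ : List Letter) : List Letter :=
  ρ.filter (fun m => decide (m.sym ∈ S'.syms))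

/-- An interpretation over a domain D. -/
structure Interp (D : Type) where
  fn : Fn → List D → D
  pn : Pn → List D → Bool

/-- One execution step on (non-⊥) states; predicate letters and labels do not change the state. -/
def execLetter {D : Type} (i : Interp D) (d : Var → D) : Letter → (Var → D)
  | .asgn y f xs => Function.update d y (i.fn f (xs.map d))
  | _ => d

/-- M[schema(σ)]^i_d : the state after executing the assignments of the word σ from d. -/
def execWord {D : Type} (i : Interp D) (d : Var → D) (σ : List Letter) : Var → D :=
  σ.foldl (execLetter i) d

/-- ρ is consistent with (i,d): every predicate letter in ρ is evaluated by i in accordance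
    with the sequence of assignments preceding it. -/
def Consistent {D : Type} (i : Interp D) (d : Var → D) (ρ : List Letter) : Prop :=
  ∀ σ p xs Z, (σ ++ [Letter.pred p xs Z]) <+: ρ → i.pn p (xs.map (execWord i d σ)) = Z

/-- `ρ` is a finite prefix of the path π(S,i,d). -/
def PrefixOfPi {D : Type} (i : Interp D) (d : Var → D) (S : Schema) (ρ : List Letter) : Prop :=
  PathPrefix S ρ ∧ Consistent i d ρ

/-- The set of finite prefixes of π(S,i,d); this set determines the
    (possibly infinite) word π(S,i,d) uniquely. -/
def PiPrefixes {D : Type} (i : Interp D) (d : Var → D) (S : Schema) : Set (List Letter) :=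
  {ρ | PrefixOfPi i d S ρ}

open Classical in
/-- The final state M[S]^i_d; `none` represents ⊥ (non-termination). -/
noncomputable def finalState {D : Type} (i : Interp D) (d : Var → D) (S : Schema) :
    Option (Var → D) :=
  if h : ∃ ρ, Paths S ρ ∧ Consistent i d ρ then some (execWord i d h.choose) else none

/-- The Herbrand domain Term(F,V). -/
inductive Tm : Type where
  | var : Var → Tm
  | app : Fn → List Tm → Tm

/-- A Herbrand interpretation: function symbols act as term constructors. -/
def Interp.IsHerbrand (j : Interp Tm) : Prop := ∀ f ts, j.fn f ts = Tm.app f ts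

/-- The natural state e. -/
def natState : Var → Tm := Tm.var

/-- A fixed Herbrand interpretation (the predicate part is irrelevant for executing
    assignments). -/
def hInterp : Interp Tm := ⟨fun f ts => Tm.app f ts, fun _ _ => true⟩

/-- M[σ]_e : the Herbrand state after executing the assignments of σ from the natural state. -/
def hExec (σ : List Letter) : Var → Tm := execWord hInterp natState σ

/-- p(t) = Y is a consequence of μ. -/
def Consequence (μ : List Letter) (p : Pn) (ts : List Tm) (Y : Bool) : Prop :=
  ∃ μ' xs, (μ' ++ [Letter.pred p xs Y]) <+: μ ∧ xs.map (hExec μ') = ts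

/-- ρ is executable: ρ is a prefix of π(S,i,d) for some domain, interpretation and state. -/
def Executable (S : Schema) (ρ : List Letter) : Prop :=
  ∃ (D : Type) (i : Interp D) (d : Var → D), PrefixOfPi i d S ρ

/-- ρ (through S) and ρ' (through S') are compatible: for some domain, interpretation i
    and state d they are prefixes of π(S,i,d) and π(S',i,d) respectively. -/
def Compatible (S : Schema) (ρ : List Letter) (S' : Schema) (ρ' : List Letter) : Prop :=
  ∃ (D : Type) (i : Interp D) (d : Var → D), PrefixOfPi i d S ρ ∧ PrefixOfPi i d S' ρ'

/-- `Sub T S`: T occurs as a subschema of S. -/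
inductive Sub : Schema → Schema → Prop where
  | refl (S : Schema) : Sub S S
  | seqL {T S₁ S₂} : Sub T S₁ → Sub T (Schema.seq S₁ S₂)
  | seqR {T S₁ S₂} : Sub T S₂ → Sub T (Schema.seq S₁ S₂)
  | iteT {T p xs S₁ S₂} : Sub T S₁ → Sub T (Schema.ite p xs S₁ S₂)
  | iteF {T p xs S₁ S₂} : Sub T S₂ → Sub T (Schema.ite p xs S₁ S₂)
  | loop {T q xs B} : Sub T B → Sub T (Schema.loop q xs B)

/-- Simple l-reductions of paths through S. -/
inductive SimpleRed (S : Schema) (l : Label) : List Letter → List Letter → Prop where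
  | loopRed {p xs B σ α γ} :
      Sub (Schema.loop p xs B) S → Paths B σ → Sym.lab l ∉ B.syms →
      SimpleRed S l (α ++ [Letter.pred p xs true] ++ σ ++ [Letter.pred p xs false] ++ γ)
                    (α ++ [Letter.pred p xs false] ++ γ)
  | iteRed {p xs S₁ S₂ σ α γ} {Z : Bool} :
      Sub (Schema.ite p xs S₁ S₂) S → Paths (if Z then S₁ else S₂) σ →
      (if Z then S₂ else S₁) = Schema.skip →
      Sym.lab l ∉ S₁.syms → Sym.lab l ∉ S₂.syms →
      SimpleRed S l (α ++ [Letter.pred p xs Z] ++ σ ++ γ)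
                    (α ++ [Letter.pred p xs (!Z)] ++ γ)

/-- ρ is l-reducible to ρ': zero or more simple l-reductions. -/
def Reducible (S : Schema) (l : Label) : List Letter → List Letter → Prop :=
  Relation.ReflTransGen (SimpleRed S l)

/-- maxpre(σ,σ') : the maximal common prefix of two words. -/
def maxpre : List Letter → List Letter → List Letter
  | a :: as, b :: bs => if a = b then a :: maxpre as bs else []
  | _, _ => []

/-- The sequence of function and predicate symbols through which a path passes. -/
def symSeq (ρ : List Letter) : List Sym :=
  ρ.filterMap fun m => match m with
    | Letter.asgn _ f _ => some (Sym.fn f)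
    | Letter.pred p _ _ => some (Sym.pn p)
    | Letter.lab _ => none

/-- S' (a quotient of S containing l) is a (ρl,V)-path-faithful dynamic slice of S:
    (1) every variable of V defines the same term after proj_{S'}(ρ) as after ρ, and
    (2) every maximal path through S' compatible with ρ has proj_{S'}(ρ) as a prefix
        (equivalently: whenever ρ is a prefix of π(S,i,d), proj_{S'}(ρ) is a prefix
        of π(S',i,d)). -/
def IsPFDS (S : Schema) (ρ : List Letter) (l : Label) (V : Set Var) (S' : Schema) : Prop :=
  (∀ v ∈ V, hExec (proj S' ρ) v = hExec ρ v) ∧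
  ∀ (D : Type) (i : Interp D) (d : Var → D),
    PrefixOfPi i d S ρ → PrefixOfPi i d S' (proj S' ρ)

/-- S' (a quotient of S containing l) is a (ρl,V)-dynamic slice of S: every maximal path
    through S' compatible with ρ has a prefix ρ' to which proj_{S'}(ρ) is l-reducible and
    such that every variable of V defines the same term after ρ' as after ρ. -/
def IsDS (S : Schema) (ρ : List Letter) (l : Label) (V : Set Var) (S' : Schema) : Prop :=
  ∀ (D : Type) (i : Interp D) (d : Var → D), PrefixOfPi i d S ρ →
    ∃ ρ', PrefixOfPi i d S' ρ' ∧ Reducible S' l (proj S' ρ) ρ' ∧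
      ∀ v ∈ V, hExec ρ' v = hExec ρ v

/-- T' is a (ρ,V)-path-faithful dynamic end slice of T
    (S = T l with a label l at the end, S' = T' l). -/
def IsPFDSEnd (T : Schema) (ρ : List Letter) (V : Set Var) (T' : Schema) : Prop :=
  IsPFDS (Schema.seq T (Schema.label 0)) ρ 0 V (Schema.seq T' (Schema.label 0))

/-- T' is a (ρ,V)-dynamic end slice of T. -/
def IsDSEnd (T : Schema) (ρ : List Letter) (V : Set Var) (T' : Schema) : Prop :=
  IsDS (Schema.seq T (Schema.label 0)) ρ 0 V (Schema.seq T' (Schema.label 0))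

/-- The set of function and predicate symbols of a schema. -/
def fpsyms (T : Schema) : Set Sym := {s | s ∈ T.syms ∧ ∀ l : Label, s ≠ Sym.lab l}

/-- T is a minimal (ρ,V)-path-faithful dynamic end slice of S: it is a path-faithful
    dynamic end slice, and no quotient of S with a strictly smaller set of function and
    predicate symbols is a (ρ,V)-dynamic end slice of S. -/
def MinimalPFDSEnd (S : Schema) (ρ : List Letter) (V : Set Var) (T : Schema) : Prop :=
  IsPFDSEnd S ρ V T ∧
  ∀ T', IsQuotient T' S → fpsyms T' ⊂ fpsyms T → ¬ IsDSEnd S ρ V T'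

open List in
lemma paths_nonempty (S : Schema) : ∃ τ, Paths S τ := by
  induction S with
  | skip => exact ⟨[], .skip⟩
  | label l => exact ⟨_, .label l⟩
  | assign y f xs => exact ⟨_, .assign y f xs⟩
  | seq S₁ S₂ ih₁ ih₂ =>
    obtain ⟨a, ha⟩ := ih₁; obtain ⟨b, hb⟩ := ih₂; exact ⟨_, .seq ha hb⟩
  | ite p xs S₁ S₂ ih₁ _ => obtain ⟨a, ha⟩ := ih₁; exact ⟨_, .iteTrue ha⟩
  | loop q xs T _ => exact ⟨_, .loopFalse q xs T⟩

open List in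
/-- Dichotomy for a one-letter extension prefix of a concatenation. -/
lemma dich {σ a b : List Letter} {m : Letter} (h : σ ++ [m] <+: a ++ b) :
    (σ ++ [m]) <+: a ∨ ∃ σ₂, σ = a ++ σ₂ ∧ (σ₂ ++ [m]) <+: b := by
  rcases le_or_gt a.length σ.length with hle | hlt
  · have ha : a <+: σ := by
      have h2 : σ <+: a ++ b := ((prefix_append σ [m]).trans h)
      exact prefix_of_prefix_length_le (prefix_append a b) h2 hle
    obtain ⟨σ₂, rfl⟩ := ha
    right
    refine ⟨σ₂, rfl, ?_⟩
    rw [append_assoc] at h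
    exact (prefix_append_right_inj a).mp h
  · left
    exact prefix_of_prefix_length_le h (prefix_append a b) (by simp; omega)

open List in
/-- Π(S) is prefix-free. -/
lemma prefix_free {S : Schema} {τ τ' : List Letter} (h : Paths S τ) (h' : Paths S τ')
    (hc : τ <+: τ' ∨ τ' <+: τ) : τ = τ' := by
  induction h generalizing τ' with
  | skip => cases h'; rfl
  | label l => cases h'; rfl
  | assign y f xs => cases h'; rfl
  | seq h₁ h₂ ih₁ ih₂ =>
    rename_i S₁ S₂ w₁ w₂
    cases h' with
    | seq h₁' h₂' =>
      rename_i w₁' w₂'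
      have hcomp : w₁ <+: w₁' ∨ w₁' <+: w₁ := by
        rcases hc with hc | hc
        · exact prefix_or_prefix_of_prefix ((prefix_append w₁ w₂).trans hc)
            (prefix_append w₁' w₂')
        · exact prefix_or_prefix_of_prefix ((prefix_append w₁ w₂))
            ((prefix_append w₁' w₂').trans hc)
      have he : w₁ = w₁' := ih₁ h₁' hcomp
      subst he
      have : w₂ <+: w₂' ∨ w₂' <+: w₂ := by
        rcases hc with hc | hc
        · exact Or.inl ((prefix_append_right_inj w₁).mp hc)
        · exact Or.inr ((prefix_append_right_inj w₁).mp hc)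
      rw [ih₂ h₂' this]
  | iteTrue h₁ ih₁ =>
    cases h' with
    | iteTrue h₁' =>
      rcases hc with hc | hc
      · obtain ⟨-, hc⟩ := cons_prefix_cons.mp hc
        rw [ih₁ h₁' (Or.inl hc)]
      · obtain ⟨-, hc⟩ := cons_prefix_cons.mp hc
        rw [ih₁ h₁' (Or.inr hc)]
    | iteFalse h₂' =>
      rcases hc with hc | hc <;> · obtain ⟨he, -⟩ := cons_prefix_cons.mp hc; cases he
  | iteFalse h₂ ih₂ =>
    cases h' with
    | iteFalse h₂' =>
      rcases hc with hc | hc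
      · obtain ⟨-, hc⟩ := cons_prefix_cons.mp hc
        rw [ih₂ h₂' (Or.inl hc)]
      · obtain ⟨-, hc⟩ := cons_prefix_cons.mp hc
        rw [ih₂ h₂' (Or.inr hc)]
    | iteTrue h₁' =>
      rcases hc with hc | hc <;> · obtain ⟨he, -⟩ := cons_prefix_cons.mp hc; cases he
  | loopFalse q xs T =>
    cases h' with
    | loopFalse => rfl
    | loopTrue h₁' h₂' =>
      rcases hc with hc | hc <;> · obtain ⟨he, -⟩ := cons_prefix_cons.mp hc; cases he
  | loopTrue h₁ h₂ ih₁ ih₂ =>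
    rename_i q xs T w ws
    cases h' with
    | loopFalse =>
      rcases hc with hc | hc <;> · obtain ⟨he, -⟩ := cons_prefix_cons.mp hc; cases he
    | loopTrue h₁' h₂' =>
      rename_i w' ws'
      have hc' : (w ++ ws) <+: (w' ++ ws') ∨ (w' ++ ws') <+: (w ++ ws) := by
        rcases hc with hc | hc
        · exact Or.inl (cons_prefix_cons.mp hc).2
        · exact Or.inr (cons_prefix_cons.mp hc).2
      have hcomp : w <+: w' ∨ w' <+: w := by
        rcases hc' with hc' | hc'
        · exact prefix_or_prefix_of_prefix ((prefix_append w ws).trans hc')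
            (prefix_append w' ws')
        · exact prefix_or_prefix_of_prefix (prefix_append w ws)
            ((prefix_append w' ws').trans hc')
      have he : w = w' := ih₁ h₁' hcomp
      subst he
      have : ws <+: ws' ∨ ws' <+: ws := by
        rcases hc' with hc' | hc'
        · exact Or.inl ((prefix_append_right_inj w).mp hc')
        · exact Or.inr ((prefix_append_right_inj w).mp hc')
      rw [ih₂ h₂' this]

/-- Forget the boolean value of a predicate letter. -/
def Letter.core : Letter → Letter
  | .pred p xs _ => .pred p xs true
  | m => m

open List in
/-- Determinism of the next letter, up to the boolean value of predicate letters. -/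
lemma core_det {S : Schema} {τ τ' σ : List Letter} {m m' : Letter}
    (h : Paths S τ) (h' : Paths S τ')
    (hm : σ ++ [m] <+: τ) (hm' : σ ++ [m'] <+: τ') : m.core = m'.core := by
  induction h generalizing τ' σ with
  | skip => simp [List.prefix_nil] at hm
  | label l =>
    cases h'
    match σ, (List.prefix_cons_iff ..).mp hm, (List.prefix_cons_iff ..).mp hm' with
    | [], _, _ =>
      simp only [List.nil_append, cons_prefix_cons, List.prefix_nil] at hm hm'
      rw [hm.1, hm'.1]
    | a :: σ', h1, h2 =>
      simp only [List.cons_append, cons_prefix_cons, List.prefix_nil,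
        List.append_eq_nil_iff] at hm; simp at hm
  | assign y f xs =>
    cases h'
    match σ with
    | [] =>
      simp only [List.nil_append, cons_prefix_cons, List.prefix_nil] at hm hm'
      rw [hm.1, hm'.1]
    | a :: σ' => simp only [List.cons_append, cons_prefix_cons, List.prefix_nil] at hm; simp at hm
  | seq h₁ h₂ ih₁ ih₂ =>
    rename_i S₁ S₂ w₁ w₂
    cases h' with
    | seq h₁' h₂' =>
      rename_i w₁' w₂'
      rcases dich hm with hA | ⟨σ₂, rfl, hB⟩ <;>
        rcases dich hm' with hA' | ⟨σ₂', he', hB'⟩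
      · exact ih₁ h₁' hA hA'
      · -- σ++[m] <+: w₁, σ = w₁' ++ σ₂'
        exfalso
        have hw : w₁' = w₁ := prefix_free h₁' h₁ (by
          refine Or.inl ?_
          calc w₁' <+: w₁' ++ σ₂' := prefix_append _ _
          _ = _ := he'.symm
          _ <+: σ ++ [m] := prefix_append _ _
          _ <+: w₁ := hA)
        subst hw
        have := hA.length_le
        simp [he'] at this
      · exfalso
        have hw : w₁ = w₁' := prefix_free h₁ h₁' (by
          refine Or.inl ?_
          calc w₁ <+: w₁ ++ σ₂ := prefix_append _ _
          _ <+: (w₁ ++ σ₂) ++ [m'] := prefix_append _ _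
          _ <+: w₁' := hA')
        subst hw
        have := hA'.length_le
        simp at this
      · have hw : w₁ = w₁' := prefix_free h₁ h₁' (by
          rcases he' with he'
          refine prefix_or_prefix_of_prefix ?_ ?_ (l₃ := w₁ ++ σ₂)
          · exact prefix_append _ _
          · rw [he']; exact prefix_append _ _)
        subst hw
        have hσ : σ₂ = σ₂' := by
          have := List.append_cancel_left he'
          exact this
        subst hσ
        exact ih₂ h₂' hB hB'
  | iteTrue h₁ ih₁ =>
    rename_i p xs S₁ S₂ w
    match σ with
    | [] =>
      have h1 := (cons_prefix_cons.mp hm).1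
      cases h' with
      | iteTrue h₁' =>
        have h2 := (cons_prefix_cons.mp hm').1
        rw [h1, h2]
      | iteFalse h₂' =>
        have h2 := (cons_prefix_cons.mp hm').1
        rw [h1, h2]; rfl
    | a :: σ' =>
      have hh := cons_prefix_cons.mp hm
      cases h' with
      | iteTrue h₁' =>
        have hh' := cons_prefix_cons.mp hm'
        exact ih₁ h₁' hh.2 hh'.2
      | iteFalse h₂' =>
        have hh' := cons_prefix_cons.mp hm'
        exact absurd (hh.1.symm.trans hh'.1) (by simp)
  | iteFalse h₂ ih₂ =>
    rename_i p xs S₁ S₂ w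
    match σ with
    | [] =>
      have h1 := (cons_prefix_cons.mp hm).1
      cases h' with
      | iteTrue h₁' =>
        have h2 := (cons_prefix_cons.mp hm').1
        rw [h1, h2]; rfl
      | iteFalse h₂' =>
        have h2 := (cons_prefix_cons.mp hm').1
        rw [h1, h2]
    | a :: σ' =>
      have hh := cons_prefix_cons.mp hm
      cases h' with
      | iteTrue h₁' =>
        have hh' := cons_prefix_cons.mp hm'
        exact absurd (hh.1.symm.trans hh'.1) (by simp)
      | iteFalse h₂' =>
        have hh' := cons_prefix_cons.mp hm'
        exact ih₂ h₂' hh.2 hh'.2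
  | loopFalse q xs T =>
    match σ with
    | [] =>
      have h1 := (cons_prefix_cons.mp hm).1
      cases h' with
      | loopFalse =>
        have h2 := (cons_prefix_cons.mp hm').1
        rw [h1, h2]
      | loopTrue h₁' h₂' =>
        have h2 := (cons_prefix_cons.mp hm').1
        rw [h1, h2]; rfl
    | a :: σ' =>
      have hh := cons_prefix_cons.mp hm
      simp [List.prefix_nil] at hh
  | loopTrue h₁ h₂ ih₁ ih₂ =>
    rename_i q xs T w ws
    match σ with
    | [] =>
      have h1 := (cons_prefix_cons.mp hm).1
      cases h' with
      | loopFalse =>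
        have h2 := (cons_prefix_cons.mp hm').1
        rw [h1, h2]; rfl
      | loopTrue h₁' h₂' =>
        have h2 := (cons_prefix_cons.mp hm').1
        rw [h1, h2]
    | a :: σ' =>
      have hh := cons_prefix_cons.mp hm
      cases h' with
      | loopFalse =>
        have hh' := cons_prefix_cons.mp hm'
        have := hh'.2
        simp [List.prefix_nil] at this
      | loopTrue h₁' h₂' =>
        rename_i w' ws'
        have hh' := cons_prefix_cons.mp hm'
        rcases dich hh.2 with hA | ⟨σ₂, he, hB⟩ <;>
          rcases dich hh'.2 with hA' | ⟨σ₂', he', hB'⟩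
        · exact ih₁ h₁' hA hA'
        · exfalso
          have hw : w' = w := prefix_free h₁' h₁ (by
            refine Or.inl ?_
            calc w' <+: w' ++ σ₂' := prefix_append _ _
            _ = σ' := he'.symm
            _ <+: σ' ++ [m] := prefix_append _ _
            _ <+: w := hA)
          subst hw
          have := hA.length_le
          simp [he'] at this
        · exfalso
          have hw : w = w' := prefix_free h₁ h₁' (by
            refine Or.inl ?_
            calc w <+: w ++ σ₂ := by rw [← he]; exact (he ▸ prefix_append w σ₂)
            _ = σ' := he.symm
            _ <+: σ' ++ [m'] := prefix_append _ _
            _ <+: w' := hA')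
          subst hw
          have := hA'.length_le
          simp [he] at this
        · have hw : w = w' := prefix_free h₁ h₁' (by
            refine prefix_or_prefix_of_prefix ?_ ?_ (l₃ := σ')
            · rw [he]; exact prefix_append _ _
            · rw [he']; exact prefix_append _ _)
          subst hw
          have hσ : σ₂ = σ₂' := by
            rw [he] at he'
            exact List.append_cancel_left he'
          subst hσ
          exact ih₂ h₂' hB hB'

open List in
/-- If a path can continue with ⟨p(x),Z⟩ then it can continue with ⟨p(x),Y⟩ for either Y. -/
lemma bool_complete {S : Schema} {τ σ : List Letter} {p : Pn} {xs : List Var} {Z : Bool}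
    (h : Paths S τ) (hm : σ ++ [Letter.pred p xs Z] <+: τ) (Y : Bool) :
    ∃ τ', Paths S τ' ∧ σ ++ [Letter.pred p xs Y] <+: τ' := by
  induction h generalizing σ with
  | skip => simp [List.prefix_nil] at hm
  | label l =>
    exfalso
    match σ with
    | [] => simp only [List.nil_append, cons_prefix_cons] at hm; cases hm.1
    | a :: σ' =>
      have := (cons_prefix_cons.mp hm).2; simp [List.prefix_nil] at this
  | assign y f xs' =>
    exfalso
    match σ with
    | [] => simp only [List.nil_append, cons_prefix_cons] at hm; cases hm.1
    | a :: σ' =>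
      have := (cons_prefix_cons.mp hm).2; simp [List.prefix_nil] at this
  | seq h₁ h₂ ih₁ ih₂ =>
    rename_i S₁ S₂ w₁ w₂
    rcases dich hm with hA | ⟨σ₂, rfl, hB⟩
    · obtain ⟨τ₁, hτ₁, hpre⟩ := ih₁ hA
      exact ⟨τ₁ ++ w₂, .seq hτ₁ h₂, hpre.trans (prefix_append _ _)⟩
    · obtain ⟨τ₂, hτ₂, hpre⟩ := ih₂ hB
      refine ⟨w₁ ++ τ₂, .seq h₁ hτ₂, ?_⟩
      rw [List.append_assoc]
      exact (prefix_append_right_inj w₁).mpr hpre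
  | iteTrue h₁ ih₁ =>
    rename_i p' xs' S₁ S₂ w
    match σ with
    | [] =>
      have h1 := (cons_prefix_cons.mp hm).1
      injection h1 with e1 e2 e3
      subst e1; subst e2
      cases Y with
      | true => exact ⟨_, .iteTrue h₁, by simp [cons_prefix_cons]⟩
      | false =>
        obtain ⟨w₂, hw₂⟩ := paths_nonempty S₂
        exact ⟨_, .iteFalse hw₂, by simp [cons_prefix_cons]⟩
    | a :: σ' =>
      have hh := cons_prefix_cons.mp hm
      obtain ⟨τ₁, hτ₁, hpre⟩ := ih₁ hh.2
      exact ⟨_, .iteTrue hτ₁, by simpa [cons_prefix_cons, hh.1] using hpre⟩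
  | iteFalse h₂ ih₂ =>
    rename_i p' xs' S₁ S₂ w
    match σ with
    | [] =>
      have h1 := (cons_prefix_cons.mp hm).1
      injection h1 with e1 e2 e3
      subst e1; subst e2
      cases Y with
      | false => exact ⟨_, .iteFalse h₂, by simp [cons_prefix_cons]⟩
      | true =>
        obtain ⟨w₁, hw₁⟩ := paths_nonempty S₁
        exact ⟨_, .iteTrue hw₁, by simp [cons_prefix_cons]⟩
    | a :: σ' =>
      have hh := cons_prefix_cons.mp hm
      obtain ⟨τ₂, hτ₂, hpre⟩ := ih₂ hh.2
      exact ⟨_, .iteFalse hτ₂, by simpa [cons_prefix_cons, hh.1] using hpre⟩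
  | loopFalse q xs' T =>
    match σ with
    | [] =>
      have h1 := (cons_prefix_cons.mp hm).1
      injection h1 with e1 e2 e3
      subst e1; subst e2
      cases Y with
      | false => exact ⟨_, .loopFalse _ _ T, by simp [cons_prefix_cons]⟩
      | true =>
        obtain ⟨w, hw⟩ := paths_nonempty T
        exact ⟨_, .loopTrue hw (.loopFalse _ _ T), by simp [cons_prefix_cons]⟩
    | a :: σ' =>
      have := (cons_prefix_cons.mp hm).2; simp [List.prefix_nil] at this
  | loopTrue h₁ h₂ ih₁ ih₂ =>
    rename_i q xs' T w ws
    match σ with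
    | [] =>
      have h1 := (cons_prefix_cons.mp hm).1
      injection h1 with e1 e2 e3
      subst e1; subst e2
      cases Y with
      | true => exact ⟨_, .loopTrue h₁ h₂, by simp [cons_prefix_cons]⟩
      | false => exact ⟨_, .loopFalse _ _ T, by simp [cons_prefix_cons]⟩
    | a :: σ' =>
      have hh := cons_prefix_cons.mp hm
      rcases dich hh.2 with hA | ⟨σ₂, he, hB⟩
      · obtain ⟨τ₁, hτ₁, hpre⟩ := ih₁ hA
        refine ⟨_, .loopTrue hτ₁ h₂, ?_⟩
        rw [← hh.1]
        exact cons_prefix_cons.mpr ⟨rfl, hpre.trans (prefix_append _ _)⟩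
      · obtain ⟨τ₂, hτ₂, hpre⟩ := ih₂ hB
        refine ⟨_, .loopTrue h₁ hτ₂, ?_⟩
        rw [← hh.1]
        refine cons_prefix_cons.mpr ⟨rfl, ?_⟩
        have : σ' ++ [Letter.pred p xs Y] <+: w ++ τ₂ := by
          rw [he, List.append_assoc]
          exact (prefix_append_right_inj w).mpr hpre
        exact this

/-- Lemma 2.3 / exe.lem: for σ ∈ pre(Π(S)), the set
    {m ∈ L(S) : σm ∈ pre(Π(S))} is a singleton label, a singleton assignment letter,
    a pair {⟨p(x),true⟩,⟨p(x),false⟩}, or empty; and it is empty whenever σ ∈ Π(S). -/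
theorem statement_0 (S : Schema) (σ : List Letter) (h : PathPrefix S σ) :
    ((∃ l : Label, {m : Letter | PathPrefix S (σ ++ [m])} = {Letter.lab l}) ∨
     (∃ (y : Var) (f : Fn) (xs : List Var),
        {m : Letter | PathPrefix S (σ ++ [m])} = {Letter.asgn y f xs}) ∨
     (∃ (p : Pn) (xs : List Var),
        {m : Letter | PathPrefix S (σ ++ [m])} =
          {Letter.pred p xs true, Letter.pred p xs false}) ∨
     ({m : Letter | PathPrefix S (σ ++ [m])} = ∅)) ∧
    (Paths S σ → {m : Letter | PathPrefix S (σ ++ [m])} = ∅) := by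
  constructor
  · by_cases hne : {m : Letter | PathPrefix S (σ ++ [m])} = ∅
    · exact Or.inr (Or.inr (Or.inr hne))
    · obtain ⟨m₀, hm₀⟩ := Set.nonempty_iff_ne_empty.mpr hne
      obtain ⟨τ₀, hτ₀, hpre₀⟩ := hm₀
      have hcore : ∀ m, PathPrefix S (σ ++ [m]) → m.core = m₀.core := by
        rintro m ⟨τ, hτ, hpre⟩
        exact core_det hτ hτ₀ hpre hpre₀
      cases m₀ with
      | lab l =>
        refine Or.inl ⟨l, ?_⟩
        ext m
        simp only [Set.mem_setOf_eq, Set.mem_singleton_iff]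
        constructor
        · intro hmem
          have := hcore m hmem
          cases m <;> simp [Letter.core] at this <;> simp [this]
        · rintro rfl
          exact ⟨τ₀, hτ₀, hpre₀⟩
      | asgn y f xs =>
        refine Or.inr (Or.inl ⟨y, f, xs, ?_⟩)
        ext m
        simp only [Set.mem_setOf_eq, Set.mem_singleton_iff]
        constructor
        · intro hmem
          have := hcore m hmem
          cases m <;> simp [Letter.core] at this
          obtain ⟨rfl, rfl, rfl⟩ := this
          rfl
        · rintro rfl
          exact ⟨τ₀, hτ₀, hpre₀⟩
      | pred p xs Z =>
        refine Or.inr (Or.inr (Or.inl ⟨p, xs, ?_⟩))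
        ext m
        simp only [Set.mem_setOf_eq, Set.mem_insert_iff, Set.mem_singleton_iff]
        constructor
        · intro hmem
          have := hcore m hmem
          cases m <;> simp [Letter.core] at this
          obtain ⟨rfl, rfl⟩ := this
          rename_i Z'
          cases Z' <;> simp
        · intro hmem
          have hany : ∀ Y : Bool, PathPrefix S (σ ++ [Letter.pred p xs Y]) := by
            intro Y
            obtain ⟨τ', hτ', hp'⟩ := bool_complete hτ₀ hpre₀ Y
            exact ⟨τ', hτ', hp'⟩
          rcases hmem with rfl | rfl
          · exact hany true
          · exact hany false
  · intro hσ
    ext m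
    simp only [Set.mem_setOf_eq, Set.mem_empty_iff_false, iff_false]
    rintro ⟨τ, hτ, hpre⟩
    have hστ : σ = τ :=
      prefix_free hσ hτ (Or.inl ((List.prefix_append σ [m]).trans hpre))
    subst hστ
    have := hpre.length_le
    simp at this

end SchemaSlicing
end

section
/- For all schemas S₁ and S₂ (not only predicate-free ones), every interpretation i over a domain D, and every state d ≠ ⊥: if M[S₁]^i_d ≠ ⊥ then M[S₁S₂]^i_d = M[S₂]^i_{M[S₁]^i_d} and π(S₁S₂, i, d) = π(S₁, i, d) · π(S₂, i, M[S₁]^i_d); and if M[S₁]^i_d = ⊥ then M[S₁S₂]^i_d = ⊥ and π(S₁S₂, i, d) = π(S₁, i, d). -/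
namespace SchemaSlicing

/-! ### Auxiliary lemmas for Statement 3 -/

lemma execWord_append {D : Type} (i : Interp D) (d : Var → D) (a b : List Letter) :
    execWord i d (a ++ b) = execWord i (execWord i d a) b :=
  List.foldl_append

lemma consistent_mono {D : Type} {i : Interp D} {d : Var → D} {ρ' ρ : List Letter}
    (h : ρ' <+: ρ) (hc : Consistent i d ρ) : Consistent i d ρ' :=
  fun σ p xs Z hp => hc σ p xs Z (hp.trans h)

lemma prefix_append_cases {α : Type*} {l a b : List α} (h : l <+: a ++ b) :
    l <+: a ∨ ∃ l', l = a ++ l' ∧ l' <+: b := by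
  rcases le_or_gt l.length a.length with hl | hl
  · exact Or.inl (List.prefix_of_prefix_length_le h (List.prefix_append a b) hl)
  · have ha : a <+: l := List.prefix_of_prefix_length_le (List.prefix_append a b) h hl.le
    obtain ⟨l', rfl⟩ := ha
    exact Or.inr ⟨l', rfl, (List.prefix_append_right_inj a).mp h⟩

lemma consistent_append {D : Type} {i : Interp D} {d : Var → D} {a b : List Letter} :
    Consistent i d (a ++ b) ↔ Consistent i d a ∧ Consistent i (execWord i d a) b := by
  constructor
  · intro h
    refine ⟨consistent_mono (List.prefix_append a b) h, ?_⟩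
    intro σ p xs Z hp
    have := h (a ++ σ) p xs Z (by
      rw [List.append_assoc]
      exact (List.prefix_append_right_inj a).mpr hp)
    rwa [execWord_append] at this
  · rintro ⟨h1, h2⟩ σ p xs Z hp
    rcases le_or_gt (σ ++ [Letter.pred p xs Z]).length a.length with hl | hl
    · exact h1 σ p xs Z (List.prefix_of_prefix_length_le hp (List.prefix_append a b) hl)
    · have hla : a.length ≤ σ.length := by simpa using Nat.lt_succ_iff.mp (by simpa using hl)
      have ha : a <+: σ := by
        have h' : a <+: σ ++ [Letter.pred p xs Z] :=
          List.prefix_of_prefix_length_le (List.prefix_append a b) hp (by simpa using hl.le)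
        exact List.prefix_of_prefix_length_le h' (List.prefix_append σ _) hla
      obtain ⟨σ', rfl⟩ := ha
      have hb : σ' ++ [Letter.pred p xs Z] <+: b := by
        rw [List.append_assoc] at hp
        exact (List.prefix_append_right_inj a).mp hp
      rw [execWord_append]
      exact h2 σ' p xs Z hb

lemma consistent_pred_cons {D : Type} {i : Interp D} {d : Var → D} {p : Pn} {xs : List Var}
    {Z : Bool} {w : List Letter} :
    Consistent i d (Letter.pred p xs Z :: w) ↔ i.pn p (xs.map d) = Z ∧ Consistent i d w := by
  have hs : Letter.pred p xs Z :: w = [Letter.pred p xs Z] ++ w := rfl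
  rw [hs, consistent_append]
  have hexec : execWord i d [Letter.pred p xs Z] = d := rfl
  rw [hexec]
  constructor
  · rintro ⟨h1, h2⟩
    exact ⟨h1 [] p xs Z ⟨[], rfl⟩, h2⟩
  · rintro ⟨h1, h2⟩
    refine ⟨?_, h2⟩
    intro σ p' xs' Z' hp
    obtain ⟨t, ht⟩ := hp
    cases σ with
    | nil =>
      simp only [List.nil_append, List.cons_append, List.singleton_append] at ht
      obtain ⟨h, -⟩ := List.cons_eq_cons.mp ht
      cases h
      exact h1
    | cons m σ' =>
      exfalso
      have hlen : (m :: σ' ++ [Letter.pred p' xs' Z'] ++ t).length = 1 := by rw [ht]; rfl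
      simp at hlen

lemma exists_path : ∀ S : Schema, ∃ τ, Paths S τ
  | .skip => ⟨[], .skip⟩
  | .label l => ⟨_, .label l⟩
  | .assign y f xs => ⟨_, .assign y f xs⟩
  | .seq S₁ S₂ =>
    let ⟨_, h1⟩ := exists_path S₁
    let ⟨_, h2⟩ := exists_path S₂
    ⟨_, .seq h1 h2⟩
  | .ite _ _ S₁ _ =>
    let ⟨_, h⟩ := exists_path S₁
    ⟨_, .iteTrue h⟩
  | .loop q xs T => ⟨_, .loopFalse q xs T⟩

/-- Uniqueness of the consistent terminating path through a schema. -/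
lemma path_unique {D : Type} {i : Interp D} {S : Schema} {ρ : List Letter} (h : Paths S ρ) :
    ∀ {d : Var → D} {ρ' : List Letter}, Paths S ρ' →
      Consistent i d ρ → Consistent i d ρ' → ρ = ρ' := by
  induction h with
  | skip => intro d ρ' h' _ _; cases h'; rfl
  | label l => intro d ρ' h' _ _; cases h'; rfl
  | assign y f xs => intro d ρ' h' _ _; cases h'; rfl
  | seq h1 h2 ih1 ih2 =>
    intro d ρ' h' hc hc'
    cases h' with
    | seq g1 g2 =>
      rw [consistent_append] at hc hc'
      obtain rfl := ih1 g1 hc.1 hc'.1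
      obtain rfl := ih2 g2 hc.2 hc'.2
      rfl
  | iteTrue h1 ih =>
    intro d ρ' h' hc hc'
    rw [consistent_pred_cons] at hc
    cases h' with
    | iteTrue g1 =>
      rw [consistent_pred_cons] at hc'
      rw [ih g1 hc.2 hc'.2]
    | iteFalse g1 =>
      rw [consistent_pred_cons] at hc'
      rw [hc.1] at hc'
      exact absurd hc'.1 (by simp)
  | iteFalse h1 ih =>
    intro d ρ' h' hc hc'
    rw [consistent_pred_cons] at hc
    cases h' with
    | iteTrue g1 =>
      rw [consistent_pred_cons] at hc'
      rw [hc.1] at hc'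
      exact absurd hc'.1 (by simp)
    | iteFalse g1 =>
      rw [consistent_pred_cons] at hc'
      rw [ih g1 hc.2 hc'.2]
  | loopFalse q xs T =>
    intro d ρ' h' hc hc'
    cases h' with
    | loopFalse => rfl
    | loopTrue g1 g2 =>
      rw [consistent_pred_cons] at hc hc'
      rw [hc.1] at hc'
      exact absurd hc'.1 (by simp)
  | loopTrue h1 h2 ih1 ih2 =>
    intro d ρ' h' hc hc'
    cases h' with
    | loopFalse =>
      rw [consistent_pred_cons] at hc hc'
      rw [hc.1] at hc'
      exact absurd hc'.1 (by simp)
    | loopTrue g1 g2 =>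
      rw [consistent_pred_cons] at hc hc'
      rw [consistent_append] at hc hc'
      obtain ⟨-, hca, hcb⟩ := hc
      obtain ⟨-, hca', hcb'⟩ := hc'
      obtain rfl := ih1 g1 hca hca'
      obtain rfl := ih2 g2 hcb hcb'
      rfl

/-- Every consistent finite path through S is a prefix of the consistent terminating path. -/
lemma prefix_of_pi {D : Type} {i : Interp D} {S : Schema} {ρ : List Letter} (h : Paths S ρ) :
    ∀ {d : Var → D} {τ σ : List Letter}, Paths S τ → σ <+: τ →
      Consistent i d ρ → Consistent i d σ → σ <+: ρ := by
  induction h with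
  | skip => intro d τ σ h' hστ _ _; cases h'; exact hστ
  | label l => intro d τ σ h' hστ _ _; cases h'; exact hστ
  | assign y f xs => intro d τ σ h' hστ _ _; cases h'; exact hστ
  | seq h1 h2 ih1 ih2 =>
    intro d τ σ h' hστ hcρ hcσ
    rw [consistent_append] at hcρ
    cases h' with
    | seq g1 g2 =>
      rcases prefix_append_cases hστ with hσ | ⟨σ₂, rfl, hσ₂⟩
      · exact (ih1 g1 hσ hcρ.1 hcσ).trans (List.prefix_append _ _)
      · rw [consistent_append] at hcσ
        obtain rfl : _ = _ := path_unique h1 g1 hcρ.1 hcσ.1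
        exact (List.prefix_append_right_inj _).mpr (ih2 g2 hσ₂ hcρ.2 hcσ.2)
  | iteTrue h1 ih =>
    intro d τ σ h' hστ hcρ hcσ
    rw [consistent_pred_cons] at hcρ
    cases h' with
    | iteTrue g1 =>
      cases σ with
      | nil => exact List.nil_prefix
      | cons m σ₂ =>
        rw [List.cons_prefix_cons] at hστ
        obtain ⟨rfl, hσ₂⟩ := hστ
        rw [consistent_pred_cons] at hcσ
        exact List.cons_prefix_cons.mpr ⟨rfl, ih g1 hσ₂ hcρ.2 hcσ.2⟩
    | iteFalse g1 =>
      cases σ with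
      | nil => exact List.nil_prefix
      | cons m σ₂ =>
        rw [List.cons_prefix_cons] at hστ
        obtain ⟨rfl, hσ₂⟩ := hστ
        rw [consistent_pred_cons] at hcσ
        rw [hcρ.1] at hcσ
        exact absurd hcσ.1 (by simp)
  | iteFalse h1 ih =>
    intro d τ σ h' hστ hcρ hcσ
    rw [consistent_pred_cons] at hcρ
    cases h' with
    | iteTrue g1 =>
      cases σ with
      | nil => exact List.nil_prefix
      | cons m σ₂ =>
        rw [List.cons_prefix_cons] at hστ
        obtain ⟨rfl, hσ₂⟩ := hστ
        rw [consistent_pred_cons] at hcσ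
        rw [hcρ.1] at hcσ
        exact absurd hcσ.1 (by simp)
    | iteFalse g1 =>
      cases σ with
      | nil => exact List.nil_prefix
      | cons m σ₂ =>
        rw [List.cons_prefix_cons] at hστ
        obtain ⟨rfl, hσ₂⟩ := hστ
        rw [consistent_pred_cons] at hcσ
        exact List.cons_prefix_cons.mpr ⟨rfl, ih g1 hσ₂ hcρ.2 hcσ.2⟩
  | loopFalse q xs T =>
    intro d τ σ h' hστ hcρ hcσ
    rw [consistent_pred_cons] at hcρ
    cases h' with
    | loopFalse => exact hστ
    | loopTrue g1 g2 =>
      cases σ with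
      | nil => exact List.nil_prefix
      | cons m σ₂ =>
        rw [List.cons_prefix_cons] at hστ
        obtain ⟨rfl, hσ₂⟩ := hστ
        rw [consistent_pred_cons] at hcσ
        rw [hcρ.1] at hcσ
        exact absurd hcσ.1 (by simp)
  | loopTrue h1 h2 ih1 ih2 =>
    intro d τ σ h' hστ hcρ hcσ
    rw [consistent_pred_cons, consistent_append] at hcρ
    obtain ⟨hpt, hca, hcb⟩ := hcρ
    cases h' with
    | loopFalse =>
      cases σ with
      | nil => exact List.nil_prefix
      | cons m σ₂ =>
        rw [List.cons_prefix_cons] at hστ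
        obtain ⟨rfl, hσ₂⟩ := hστ
        rw [consistent_pred_cons] at hcσ
        rw [hpt] at hcσ
        exact absurd hcσ.1 (by simp)
    | loopTrue g1 g2 =>
      cases σ with
      | nil => exact List.nil_prefix
      | cons m σ₂ =>
        rw [List.cons_prefix_cons] at hστ
        obtain ⟨rfl, hσ₂⟩ := hστ
        rw [consistent_pred_cons] at hcσ
        rcases prefix_append_cases hσ₂ with hσ | ⟨σ₃, rfl, hσ₃⟩
        · exact List.cons_prefix_cons.mpr
            ⟨rfl, (ih1 g1 hσ hca hcσ.2).trans (List.prefix_append _ _)⟩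
        · rw [consistent_append] at hcσ
          obtain rfl : _ = _ := path_unique h1 g1 hca hcσ.2.1
          exact List.cons_prefix_cons.mpr
            ⟨rfl, (List.prefix_append_right_inj _).mpr (ih2 g2 hσ₃ hcb hcσ.2.2)⟩

/-- for all schemas S₁, S₂, every interpretation i and state d ≠ ⊥:
    if M[S₁]^i_d ≠ ⊥ (i.e. π(S₁,i,d) is a terminating consistent path ρ₁, and then
    M[S₁]^i_d is the state reached after ρ₁), then M[S₁S₂]^i_d = M[S₂]^i_{M[S₁]^i_d} and
    π(S₁S₂,i,d) = π(S₁,i,d)·π(S₂,i,M[S₁]^i_d) (equality of paths expressed via their sets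
    of finite prefixes); and if M[S₁]^i_d = ⊥ then M[S₁S₂]^i_d = ⊥ and
    π(S₁S₂,i,d) = π(S₁,i,d). -/
theorem statement_3 {D : Type} (i : Interp D) (d : Var → D) (S₁ S₂ : Schema) :
    (∀ ρ₁, Paths S₁ ρ₁ → Consistent i d ρ₁ →
      finalState i d (Schema.seq S₁ S₂) = finalState i (execWord i d ρ₁) S₂ ∧
      PiPrefixes i d (Schema.seq S₁ S₂) =
        {σ | σ <+: ρ₁} ∪ (fun τ => ρ₁ ++ τ) '' PiPrefixes i (execWord i d ρ₁) S₂) ∧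
    ((¬ ∃ ρ₁, Paths S₁ ρ₁ ∧ Consistent i d ρ₁) →
      finalState i d (Schema.seq S₁ S₂) = none ∧
      PiPrefixes i d (Schema.seq S₁ S₂) = PiPrefixes i d S₁) := by
  constructor
  · intro ρ₁ hp₁ hc₁
    set d₁ := execWord i d ρ₁ with hd₁
    constructor
    · -- final states
      by_cases h₂ : ∃ ρ₂, Paths S₂ ρ₂ ∧ Consistent i d₁ ρ₂
      · have hseq : ∃ ρ, Paths (Schema.seq S₁ S₂) ρ ∧ Consistent i d ρ :=
          ⟨ρ₁ ++ h₂.choose, Paths.seq hp₁ h₂.choose_spec.1,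
            consistent_append.mpr ⟨hc₁, h₂.choose_spec.2⟩⟩
        rw [finalState, dif_pos hseq, finalState, dif_pos h₂]
        have heq : hseq.choose = ρ₁ ++ h₂.choose :=
          path_unique hseq.choose_spec.1
            (Paths.seq hp₁ h₂.choose_spec.1) hseq.choose_spec.2
            (consistent_append.mpr ⟨hc₁, h₂.choose_spec.2⟩)
        rw [heq, execWord_append]
      · have hseq : ¬ ∃ ρ, Paths (Schema.seq S₁ S₂) ρ ∧ Consistent i d ρ := by
          rintro ⟨ρ, hρ, hc⟩
          cases hρ with
          | seq g1 g2 =>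
            rw [consistent_append] at hc
            obtain rfl : _ = _ := path_unique hp₁ g1 hc₁ hc.1
            exact h₂ ⟨_, g2, hc.2⟩
        rw [finalState, dif_neg hseq, finalState, dif_neg h₂]
    · -- prefix sets
      ext σ
      simp only [PiPrefixes, PrefixOfPi, PathPrefix, Set.mem_setOf_eq, Set.mem_union,
        Set.mem_image]
      constructor
      · rintro ⟨⟨τ, hτ, hστ⟩, hcσ⟩
        cases hτ with
        | seq g1 g2 =>
          rcases prefix_append_cases hστ with hσ | ⟨σ₂, rfl, hσ₂⟩
          · exact Or.inl (prefix_of_pi hp₁ g1 hσ hc₁ hcσ)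
          · rw [consistent_append] at hcσ
            obtain rfl : _ = _ := path_unique hp₁ g1 hc₁ hcσ.1
            exact Or.inr ⟨σ₂, ⟨⟨_, g2, hσ₂⟩, hcσ.2⟩, rfl⟩
      · rintro (hσ | ⟨σ₂, ⟨⟨τ₂, hτ₂, hσ₂⟩, hcσ₂⟩, rfl⟩)
        · obtain ⟨τ₂, hτ₂⟩ := exists_path S₂
          exact ⟨⟨ρ₁ ++ τ₂, Paths.seq hp₁ hτ₂, hσ.trans (List.prefix_append _ _)⟩,
            consistent_mono hσ hc₁⟩
        · exact ⟨⟨ρ₁ ++ τ₂, Paths.seq hp₁ hτ₂, (List.prefix_append_right_inj _).mpr hσ₂⟩,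
            consistent_append.mpr ⟨hc₁, hcσ₂⟩⟩
  · intro hno
    constructor
    · have hseq : ¬ ∃ ρ, Paths (Schema.seq S₁ S₂) ρ ∧ Consistent i d ρ := by
        rintro ⟨ρ, hρ, hc⟩
        cases hρ with
        | seq g1 g2 =>
          rw [consistent_append] at hc
          exact hno ⟨_, g1, hc.1⟩
      rw [finalState, dif_neg hseq]
    · ext σ
      simp only [PiPrefixes, PrefixOfPi, PathPrefix, Set.mem_setOf_eq]
      constructor
      · rintro ⟨⟨τ, hτ, hστ⟩, hcσ⟩
        cases hτ with
        | seq g1 g2 =>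
          rcases prefix_append_cases hστ with hσ | ⟨σ₂, rfl, hσ₂⟩
          · exact ⟨⟨_, g1, hσ⟩, hcσ⟩
          · rw [consistent_append] at hcσ
            exact absurd ⟨_, g1, hcσ.1⟩ hno
      · rintro ⟨⟨τ, hτ, hστ⟩, hcσ⟩
        obtain ⟨τ₂, hτ₂⟩ := exists_path S₂
        exact ⟨⟨τ ++ τ₂, Paths.seq hτ hτ₂, hστ.trans (List.prefix_append _ _)⟩, hcσ⟩

end SchemaSlicing
end

section
/- Let χ be a set of schemas, D a domain, d : V → D a state, and i an interpretation over D. Then there is a Herbrand interpretation j such that for every S ∈ χ, the path π(S, j, e) equals π(S, i, d). -/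
namespace SchemaSlicing

/-- Evaluation of a term in an interpretation and state. -/
def evalTm {D : Type} (i : Interp D) (d : Var → D) : Tm → D
  | .var v => d v
  | .app f ts => i.fn f (ts.attach.map (fun t => evalTm i d t.1))
termination_by t => sizeOf t
decreasing_by have := List.sizeOf_lt_of_mem t.2; simp; omega

lemma evalTm_var {D : Type} (i : Interp D) (d : Var → D) (v : Var) :
    evalTm i d (Tm.var v) = d v := by simp [evalTm]

lemma evalTm_app {D : Type} (i : Interp D) (d : Var → D) (f : Fn) (ts : List Tm) :
    evalTm i d (Tm.app f ts) = i.fn f (ts.map (evalTm i d)) := by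
  simp [evalTm, List.attach_map_val]

/-- The Herbrand interpretation induced by (i,d). -/
def hbInterp {D : Type} (i : Interp D) (d : Var → D) : Interp Tm :=
  ⟨fun f ts => Tm.app f ts, fun p ts => i.pn p (ts.map (evalTm i d))⟩

/-- for any set χ of schemas, any domain D, state d : V → D and
    interpretation i over D, there is a Herbrand interpretation j such that
    π(S,j,e) = π(S,i,d) for every S ∈ χ (equality of the possibly infinite paths
    expressed as equality of their sets of finite prefixes). -/
theorem statement_4 (χ : Set Schema) (D : Type) (d : Var → D) (i : Interp D) :
    ∃ j : Interp Tm, j.IsHerbrand ∧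
      ∀ S ∈ χ, ∀ ρ : List Letter, (PrefixOfPi j natState S ρ ↔ PrefixOfPi i d S ρ) := by
  refine ⟨hbInterp i d, fun _ _ => rfl, fun S _ ρ => ?_⟩
  set j : Interp Tm := hbInterp i d with hj
  have key : ∀ (σ : List Letter) (t : Var → Tm) (dv : Var → D),
      (∀ v, evalTm i d (t v) = dv v) →
      ∀ v, evalTm i d (execWord j t σ v) = execWord i dv σ v := by
    intro σ
    induction σ with
    | nil => intro t dv h v; exact h v
    | cons m σ ih =>
      intro t dv h v
      apply ih
      intro w
      cases m with
      | lab l => exact h w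
      | pred p xs Z => exact h w
      | asgn y f xs =>
        simp only [execLetter]
        rcases eq_or_ne w y with rfl | hw
        · rw [Function.update_self, Function.update_self,
            show j.fn f (xs.map t) = Tm.app f (xs.map t) from rfl, evalTm_app,
            List.map_map]
          congr 1
          exact List.map_congr_left fun x _ => h x
        · rw [Function.update_of_ne hw, Function.update_of_ne hw]
          exact h w
  have hcons : Consistent j natState ρ ↔ Consistent i d ρ := by
    constructor
    · intro hc σ p xs Z hpre
      have := hc σ p xs Z hpre
      simp only [hj, hbInterp, List.map_map] at this
      rw [← this]
      congr 1
      exact List.map_congr_left fun x _ => (key σ natState d (fun v => evalTm_var i d v) x).symm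
    · intro hc σ p xs Z hpre
      have := hc σ p xs Z hpre
      simp only [hj, hbInterp, List.map_map]
      rw [← this]
      congr 1
      exact List.map_congr_left fun x _ => key σ natState d (fun v => evalTm_var i d v) x
  exact ⟨fun ⟨h1, h2⟩ => ⟨h1, hcons.mp h2⟩, fun ⟨h1, h2⟩ => ⟨h1, hcons.mpr h2⟩⟩

end SchemaSlicing
end

section
/- Let χ be a set of schemas, D a domain, d : V → D a state, and i an interpretation over D. Then there is a Herbrand interpretation j such that (1) for every S ∈ χ, π(S, j, e) = π(S, i, d), and (2) for all S₁, S₂ ∈ χ, all variables v₁, v₂, and all prefixes ρ₁ of π(S₁, j, e) and ρ₂ of π(S₂, j, e): if M[schema(ρ₁)]^j_e(v₁) = M[schema(ρ₂)]^j_e(v₂) then M[schema(ρ₁)]^i_d(v₁) = M[schema(ρ₂)]^i_d(v₂). -/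
namespace SchemaSlicing

/-- Evaluation of a Herbrand term in a domain D. -/
def tmEval {D : Type} (i : Interp D) (d : Var → D) : Tm → D
  | .var v => d v
  | .app f ts => i.fn f (ts.attach.map fun ⟨t, _⟩ => tmEval i d t)

@[simp] theorem tmEval_app {D : Type} (i : Interp D) (d : Var → D) (f : Fn) (ts : List Tm) :
    tmEval i d (Tm.app f ts) = i.fn f (ts.map (tmEval i d)) := by
  simp [tmEval, List.map_subtype]

theorem eval_execWord {D : Type} (i : Interp D) (d : Var → D) :
    ∀ (σ : List Letter) (s : Var → Tm) (v : Var),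
      tmEval i d (execWord ⟨Tm.app, fun p ts => i.pn p (ts.map (tmEval i d))⟩ s σ v) =
        execWord i (fun w => tmEval i d (s w)) σ v := by
  intro σ
  induction σ with
  | nil => intro s v; rfl
  | cons m σ ih =>
    intro s v
    simp only [execWord, List.foldl_cons]
    rw [show (List.foldl (execLetter i) (execLetter i (fun w => tmEval i d (s w)) m) σ v)
        = execWord i (execLetter i (fun w => tmEval i d (s w)) m) σ v from rfl]
    have : (fun w => tmEval i d
        (execLetter ⟨Tm.app, fun p ts => i.pn p (ts.map (tmEval i d))⟩ s m w))
        = execLetter i (fun w => tmEval i d (s w)) m := by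
      funext w
      cases m with
      | asgn y f xs =>
        simp only [execLetter, Function.update]
        by_cases h : w = y <;> simp [h, List.map_map, Function.comp_def]
      | lab l => rfl
      | pred p xs Z => rfl
    rw [← this]
    exact ih _ v

/-- Theorem 2.9 / freeint.thm: for any set χ of schemas, domain D,
    state d and interpretation i there is a Herbrand interpretation j with
    (1) π(S,j,e) = π(S,i,d) for all S ∈ χ, and (2) for S₁,S₂ ∈ χ, variables v₁,v₂ and
    prefixes ρ₁, ρ₂ of π(S₁,j,e), π(S₂,j,e): if M[schema(ρ₁)]^j_e(v₁) = M[schema(ρ₂)]^j_e(v₂)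
    then M[schema(ρ₁)]^i_d(v₁) = M[schema(ρ₂)]^i_d(v₂). -/
theorem statement_5 (χ : Set Schema) (D : Type) (d : Var → D) (i : Interp D) :
    ∃ j : Interp Tm, j.IsHerbrand ∧
      (∀ S ∈ χ, ∀ ρ : List Letter, (PrefixOfPi j natState S ρ ↔ PrefixOfPi i d S ρ)) ∧
      (∀ S₁ ∈ χ, ∀ S₂ ∈ χ, ∀ (v₁ v₂ : Var) (ρ₁ ρ₂ : List Letter),
        PrefixOfPi j natState S₁ ρ₁ → PrefixOfPi j natState S₂ ρ₂ →
        execWord j natState ρ₁ v₁ = execWord j natState ρ₂ v₂ →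
        execWord i d ρ₁ v₁ = execWord i d ρ₂ v₂) := by
  set j : Interp Tm := ⟨Tm.app, fun p ts => i.pn p (ts.map (tmEval i d))⟩ with hj
  have hde : (fun w => tmEval i d (natState w)) = d := by funext w; simp [natState, tmEval]
  have key : ∀ (σ : List Letter) (v : Var),
      tmEval i d (execWord j natState σ v) = execWord i d σ v := by
    intro σ v
    rw [eval_execWord i d σ natState v, hde]
  have hmap : ∀ σ (xs : List Var),
      List.map (tmEval i d) (List.map (execWord j natState σ) xs)
        = List.map (execWord i d σ) xs := by
    intro σ xs
    simp only [List.map_map]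
    exact List.map_congr_left fun v _ => key σ v
  have hcons : ∀ ρ, Consistent j natState ρ ↔ Consistent i d ρ := by
    intro ρ
    constructor <;> intro h σ p xs Z hpre <;> have h2 := h σ p xs Z hpre
    · have : j.pn p (List.map (execWord j natState σ) xs)
          = i.pn p (List.map (execWord i d σ) xs) := by
        rw [hj]; exact congrArg (i.pn p) (hmap σ xs)
      rwa [this] at h2
    · have : j.pn p (List.map (execWord j natState σ) xs)
          = i.pn p (List.map (execWord i d σ) xs) := by
        rw [hj]; exact congrArg (i.pn p) (hmap σ xs)
      rwa [this]
  refine ⟨j, fun f ts => rfl, ?_, ?_⟩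
  · intro S _ ρ
    unfold PrefixOfPi
    rw [hcons]
  · intro S₁ _ S₂ _ v₁ v₂ ρ₁ ρ₂ _ _ heq
    have := congrArg (tmEval i d) heq
    rwa [key, key] at this

end SchemaSlicing
end

section
/- Let S be a linear schema, let q be a while predicate in S, and let μ be a terminating path in the body of q (i.e. μ ∈ Π(T) where 'while q(y) do T' is the subschema of S at q). Then for any words α, γ: the word α⟨q,true⟩μ⟨q,false⟩γ is a path through S if and only if α⟨q,false⟩γ is a path through S; moreover α⟨q,true⟩μ⟨q,false⟩γ is a terminating path through S if and only if α⟨q,false⟩γ is a terminating path through S. -/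
namespace SchemaSlicing

/-! ### Auxiliary lemmas -/

lemma pathsSyms {S w} (h : Paths S w) : ∀ m ∈ w, m.sym ∈ S.syms := by
  induction h with
  | skip => simp
  | label l => simp [Schema.syms, Letter.sym]
  | assign y f xs => simp [Schema.syms, Letter.sym]
  | seq h1 h2 ih1 ih2 =>
      intro m hm
      rcases List.mem_append.1 hm with h | h
      · exact List.mem_append.2 (Or.inl (ih1 m h))
      · exact List.mem_append.2 (Or.inr (ih2 m h))
  | iteTrue h ih =>
      intro m hm
      rcases List.mem_cons.1 hm with rfl | hm
      · simp [Schema.syms, Letter.sym]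
      · simp only [Schema.syms, List.mem_cons, List.mem_append]
        exact Or.inr (Or.inl (ih m hm))
  | iteFalse h ih =>
      intro m hm
      rcases List.mem_cons.1 hm with rfl | hm
      · simp [Schema.syms, Letter.sym]
      · simp only [Schema.syms, List.mem_cons, List.mem_append]
        exact Or.inr (Or.inr (ih m hm))
  | loopFalse q xs T => simp [Schema.syms, Letter.sym]
  | loopTrue h1 h2 ih1 ih2 =>
      intro m hm
      rcases List.mem_cons.1 hm with rfl | hm
      · simp [Schema.syms, Letter.sym]
      · rcases List.mem_append.1 hm with h | h
        · simp only [Schema.syms, List.mem_cons]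
          exact Or.inr (ih1 m h)
        · exact ih2 m h

lemma subSyms {A B} (h : Sub A B) : ∀ s ∈ A.syms, s ∈ B.syms := by
  induction h with
  | refl => intro s hs; exact hs
  | seqL h ih => intro s hs; simp only [Schema.syms, List.mem_append]; exact Or.inl (ih s hs)
  | seqR h ih => intro s hs; simp only [Schema.syms, List.mem_append]; exact Or.inr (ih s hs)
  | iteT h ih =>
      intro s hs; simp only [Schema.syms, List.mem_cons, List.mem_append]
      exact Or.inr (Or.inl (ih s hs))
  | iteF h ih =>
      intro s hs; simp only [Schema.syms, List.mem_cons, List.mem_append]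
      exact Or.inr (Or.inr (ih s hs))
  | loop h ih =>
      intro s hs; simp only [Schema.syms, List.mem_cons]
      exact Or.inr (ih s hs)

lemma split3 {A : Type} {w ws a b g : List A} (h : w ++ ws = a ++ b ++ g) :
    (∃ g₁, w = a ++ b ++ g₁ ∧ g = g₁ ++ ws) ∨
    (∃ a₂, ws = a₂ ++ b ++ g ∧ a = w ++ a₂) ∨
    (∃ b₁ b₂, b = b₁ ++ b₂ ∧ b₁ ≠ [] ∧ b₂ ≠ [] ∧ w = a ++ b₁ ∧ ws = b₂ ++ g) := by
  rw [List.append_assoc] at h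
  rcases List.append_eq_append_iff.1 h with ⟨a', ha, hws⟩ | ⟨c', hw, hrest⟩
  · exact Or.inr (Or.inl ⟨a', by rw [hws, List.append_assoc], ha⟩)
  · rcases List.append_eq_append_iff.1 hrest with ⟨x, hc', hg⟩ | ⟨y, hb, hws⟩
    · exact Or.inl ⟨x, by rw [hw, hc', List.append_assoc], hg⟩
    · rcases eq_or_ne c' [] with rfl | hc'
      · refine Or.inr (Or.inl ⟨[], ?_, (by simpa using hw.symm)⟩)
        simp only [List.nil_append] at hb; rw [hws, hb]; simp
      · rcases eq_or_ne y [] with rfl | hy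
        · refine Or.inl ⟨[], ?_, by simpa using hws.symm⟩
          rw [hw, hb]; simp
        · exact Or.inr (Or.inr ⟨c', y, hb, hc', hy, hw, hws⟩)

/-- Π(T) is prefix-free. -/
lemma prefixFree : ∀ (T : Schema) (w μ : List Letter), Paths T w → Paths T μ →
    (w <+: μ ∨ μ <+: w) → w = μ := by
  intro T
  induction T with
  | skip => intro w μ hw hμ _; cases hw; cases hμ; rfl
  | label l => intro w μ hw hμ _; cases hw; cases hμ; rfl
  | assign y f xs => intro w μ hw hμ _; cases hw; cases hμ; rfl
  | seq S₁ S₂ ih₁ ih₂ =>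
      intro w μ hw hμ hc
      cases hw with | seq h1 h2 =>
      cases hμ with | seq g1 g2 =>
      rename_i w₁ w₂ μ₁ μ₂
      have hcomp : w₁ <+: μ₁ ∨ μ₁ <+: w₁ := by
        rcases hc with hc | hc
        · exact List.prefix_or_prefix_of_prefix ((List.prefix_append _ _).trans hc)
            (List.prefix_append _ _)
        · exact (List.prefix_or_prefix_of_prefix ((List.prefix_append _ _).trans hc)
            (List.prefix_append _ _)).symm
      have h₁ : w₁ = μ₁ := ih₁ _ _ h1 g1 hcomp
      subst h₁
      have hc2 : w₂ <+: μ₂ ∨ μ₂ <+: w₂ := by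
        rcases hc with hc | hc
        · exact Or.inl ((List.prefix_append_right_inj w₁).1 hc)
        · exact Or.inr ((List.prefix_append_right_inj w₁).1 hc)
      rw [ih₂ _ _ h2 g2 hc2]
  | ite p xs S₁ S₂ ih₁ ih₂ =>
      intro w μ hw hμ hc
      cases hw with
      | iteTrue h1 =>
          cases hμ with
          | iteTrue g1 =>
              have hc' := hc.imp (fun h => (List.cons_prefix_cons.1 h).2)
                (fun h => (List.cons_prefix_cons.1 h).2)
              rw [ih₁ _ _ h1 g1 hc']
          | iteFalse g1 =>
              exfalso
              rcases hc with hc | hc <;>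
                simpa using (List.cons_prefix_cons.1 hc).1
      | iteFalse h1 =>
          cases hμ with
          | iteTrue g1 =>
              exfalso
              rcases hc with hc | hc <;>
                simpa using (List.cons_prefix_cons.1 hc).1
          | iteFalse g1 =>
              have hc' := hc.imp (fun h => (List.cons_prefix_cons.1 h).2)
                (fun h => (List.cons_prefix_cons.1 h).2)
              rw [ih₂ _ _ h1 g1 hc']
  | loop q xs B ihB =>
      intro w μ hw hμ hc
      suffices h : ∀ n w μ, w.length ≤ n → Paths (Schema.loop q xs B) w →
          Paths (Schema.loop q xs B) μ → (w <+: μ ∨ μ <+: w) → w = μ from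
        h w.length w μ le_rfl hw hμ hc
      intro n
      induction n with
      | zero =>
          intro w μ hl hw _ _
          cases hw <;> simp at hl
      | succ n ih =>
          intro w μ hl hw hμ hc
          cases hw with
          | loopFalse =>
              cases hμ with
              | loopFalse => rfl
              | loopTrue g1 g2 =>
                  exfalso
                  rcases hc with hc | hc <;>
                    simpa using (List.cons_prefix_cons.1 hc).1
          | loopTrue h1 h2 =>
              cases hμ with
              | loopFalse =>
                  exfalso
                  rcases hc with hc | hc <;>
                    simpa using (List.cons_prefix_cons.1 hc).1
              | loopTrue g1 g2 =>
                  rename_i u w' v μ'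
                  have hc' : u ++ w' <+: v ++ μ' ∨ v ++ μ' <+: u ++ w' :=
                    hc.imp (fun h => (List.cons_prefix_cons.1 h).2)
                      (fun h => (List.cons_prefix_cons.1 h).2)
                  have huv : u <+: v ∨ v <+: u := by
                    rcases hc' with h | h
                    · exact List.prefix_or_prefix_of_prefix
                        ((List.prefix_append _ _).trans h) (List.prefix_append _ _)
                    · exact (List.prefix_or_prefix_of_prefix
                        ((List.prefix_append _ _).trans h) (List.prefix_append _ _)).symm
                  have huv' : u = v := ihB _ _ h1 g1 huv
                  subst huv'
                  have hc2 : w' <+: μ' ∨ μ' <+: w' :=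
                    hc'.imp (fun h => (List.prefix_append_right_inj u).1 h)
                      (fun h => (List.prefix_append_right_inj u).1 h)
                  have hlen : w'.length ≤ n := by
                    simp only [List.length_cons, List.length_append] at hl; omega
                  rw [ih w' μ' hlen h2 g2 hc2]


lemma singleton_no_split {A : Type} {x : A} {b₁ b₂ : List A} (hb : [x] = b₁ ++ b₂)
    (h1 : b₁ ≠ []) (h2 : b₂ ≠ []) : False := by
  cases b₁ <;> cases b₂ <;> simp_all

/-- Inserting one iteration of the loop at a ⟨q,false⟩ letter preserves terminating paths. -/
lemma insertLoop {q : Pn} {ys : List Var} {T : Schema} {μ : List Letter} (hμ : Paths T μ) :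
    ∀ {S τ}, Paths S τ → Sub (Schema.loop q ys T) S → S.syms.Nodup →
    ∀ α γ, τ = α ++ Letter.pred q ys false :: γ →
    Paths S (α ++ Letter.pred q ys true :: (μ ++ Letter.pred q ys false :: γ)) := by
  intro S τ h
  induction h with
  | skip => intro _ _ α γ heq; exact absurd heq (by simp)
  | label l =>
      intro _ _ α γ heq; exfalso
      rcases α with _ | ⟨x, α⟩ <;> simp_all
  | assign y f xs =>
      intro _ _ α γ heq; exfalso
      rcases α with _ | ⟨x, α⟩ <;> simp_all
  | seq h1 h2 ih1 ih2 =>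
      rename_i S₁ S₂ w₁ w₂
      intro hsub hnd α γ heq
      have hnd' : (S₁.syms ++ S₂.syms).Nodup := by simpa [Schema.syms] using hnd
      have hnd1 : S₁.syms.Nodup := hnd'.of_append_left
      have hnd2 : S₂.syms.Nodup := hnd'.of_append_right
      have hdisj : ∀ s, s ∈ S₁.syms → s ∈ S₂.syms → False :=
        fun s h1 h2 => (List.disjoint_of_nodup_append hnd') h1 h2
      have heq' : w₁ ++ w₂ = α ++ [Letter.pred q ys false] ++ γ := by simpa using heq
      cases hsub with
      | seqL hs =>
          have hqS₁ : Sym.pn q ∈ S₁.syms := subSyms hs _ (by simp [Schema.syms])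
          rcases split3 heq' with ⟨g₁, hww, rfl⟩ | ⟨a₂, hws, rfl⟩ |
            ⟨b₁, b₂, hb, hb₁, hb₂, hw, hws⟩
          · have := Paths.seq (ih1 hs hnd1 α g₁ (by simpa using hww)) h2
            simpa [List.append_assoc] using this
          · exfalso
            have hm : (Letter.pred q ys false).sym ∈ S₂.syms :=
              pathsSyms h2 _ (by rw [hws]; simp)
            exact hdisj _ hqS₁ (by simpa [Letter.sym] using hm)
          · exact absurd hb (fun hb => singleton_no_split hb hb₁ hb₂)
      | seqR hs =>
          have hqS₂ : Sym.pn q ∈ S₂.syms := subSyms hs _ (by simp [Schema.syms])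
          rcases split3 heq' with ⟨g₁, hww, rfl⟩ | ⟨a₂, hws, rfl⟩ |
            ⟨b₁, b₂, hb, hb₁, hb₂, hw, hws⟩
          · exfalso
            have hm : (Letter.pred q ys false).sym ∈ S₁.syms :=
              pathsSyms h1 _ (by rw [hww]; simp)
            exact hdisj _ (by simpa [Letter.sym] using hm) hqS₂
          · have := Paths.seq h1 (ih2 hs hnd2 a₂ γ (by simpa using hws))
            simpa [List.append_assoc] using this
          · exact absurd hb (fun hb => singleton_no_split hb hb₁ hb₂)
  | iteTrue h1 ih =>
      rename_i p xs S₁ S₂ w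
      intro hsub hnd α γ heq
      obtain ⟨hpnot, hnd12⟩ := List.nodup_cons.1 (show (Sym.pn p :: (S₁.syms ++ S₂.syms)).Nodup
        by simpa [Schema.syms] using hnd)
      have hnd1 : S₁.syms.Nodup := hnd12.of_append_left
      have hdisj : ∀ s, s ∈ S₁.syms → s ∈ S₂.syms → False :=
        fun s h1 h2 => (List.disjoint_of_nodup_append hnd12) h1 h2
      cases hsub with
      | iteT hs =>
          rcases α with _ | ⟨x, α⟩
          · exfalso; simp only [List.nil_append] at heq
            have := (List.cons_eq_cons.1 heq).1; simp at this
          · simp only [List.cons_append] at heq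
            obtain ⟨rfl, heq2⟩ := List.cons_eq_cons.1 heq
            have := Paths.iteTrue (p := p) (xs := xs) (S₂ := S₂) (ih hs hnd1 α γ heq2)
            simpa using this
      | iteF hs =>
          have hqS₂ : Sym.pn q ∈ S₂.syms := subSyms hs _ (by simp [Schema.syms])
          rcases α with _ | ⟨x, α⟩
          · exfalso; simp only [List.nil_append] at heq
            have := (List.cons_eq_cons.1 heq).1; simp at this
          · exfalso
            simp only [List.cons_append] at heq
            obtain ⟨rfl, heq2⟩ := List.cons_eq_cons.1 heq
            have hm : (Letter.pred q ys false).sym ∈ S₁.syms :=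
              pathsSyms h1 _ (by rw [heq2]; simp)
            exact hdisj _ (by simpa [Letter.sym] using hm) hqS₂
  | iteFalse h1 ih =>
      rename_i p xs S₁ S₂ w
      intro hsub hnd α γ heq
      obtain ⟨hpnot, hnd12⟩ := List.nodup_cons.1 (show (Sym.pn p :: (S₁.syms ++ S₂.syms)).Nodup
        by simpa [Schema.syms] using hnd)
      have hnd2 : S₂.syms.Nodup := hnd12.of_append_right
      have hdisj : ∀ s, s ∈ S₁.syms → s ∈ S₂.syms → False :=
        fun s h1 h2 => (List.disjoint_of_nodup_append hnd12) h1 h2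
      cases hsub with
      | iteT hs =>
          have hqS₁ : Sym.pn q ∈ S₁.syms := subSyms hs _ (by simp [Schema.syms])
          rcases α with _ | ⟨x, α⟩
          · exfalso; simp only [List.nil_append] at heq
            have h' := (List.cons_eq_cons.1 heq).1
            injection h' with e1 e2 e3
            subst e1
            exact hpnot (List.mem_append.2 (Or.inl hqS₁))
          · exfalso
            simp only [List.cons_append] at heq
            obtain ⟨rfl, heq2⟩ := List.cons_eq_cons.1 heq
            have hm : (Letter.pred q ys false).sym ∈ S₂.syms :=
              pathsSyms h1 _ (by rw [heq2]; simp)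
            exact hdisj _ hqS₁ (by simpa [Letter.sym] using hm)
      | iteF hs =>
          have hqS₂ : Sym.pn q ∈ S₂.syms := subSyms hs _ (by simp [Schema.syms])
          rcases α with _ | ⟨x, α⟩
          · exfalso; simp only [List.nil_append] at heq
            have h' := (List.cons_eq_cons.1 heq).1
            injection h' with e1 e2 e3
            subst e1
            exact hpnot (List.mem_append.2 (Or.inr hqS₂))
          · simp only [List.cons_append] at heq
            obtain ⟨rfl, heq2⟩ := List.cons_eq_cons.1 heq
            have := Paths.iteFalse (p := p) (xs := xs) (S₁ := S₁) (ih hs hnd2 α γ heq2)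
            simpa using this
  | loopFalse q' xs' T' =>
      intro hsub hnd α γ heq
      rcases α with _ | ⟨x, α⟩
      · simp only [List.nil_append] at heq
        obtain ⟨h1, h2⟩ := List.cons_eq_cons.1 heq
        injection h1 with e1 e2 e3
        subst e1; subst e2
        have h2' : γ = [] := h2.symm
        subst h2'
        cases hsub with
        | refl => simpa using Paths.loopTrue hμ (Paths.loopFalse _ _ _)
        | loop hs =>
            exfalso
            have hm := subSyms hs _ (show Sym.pn q' ∈ (Schema.loop q' xs' T).syms by
              simp [Schema.syms])
            have hnd' : (Sym.pn q' :: T'.syms).Nodup := by simpa [Schema.syms] using hnd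
            exact (List.nodup_cons.1 hnd').1 hm
      · exfalso
        simp only [List.cons_append] at heq
        obtain ⟨h1, h2⟩ := List.cons_eq_cons.1 heq
        simp at h2
  | loopTrue h1 h2 ih1 ih2 =>
      rename_i q' xs' T' w ws
      intro hsub hnd α γ heq
      obtain ⟨hq'T', hndT'⟩ := List.nodup_cons.1 (show (Sym.pn q' :: T'.syms).Nodup
        by simpa [Schema.syms] using hnd)
      rcases α with _ | ⟨x, α⟩
      · exfalso; simp only [List.nil_append] at heq
        have := (List.cons_eq_cons.1 heq).1; simp at this
      · simp only [List.cons_append] at heq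
        obtain ⟨rfl, heq2⟩ := List.cons_eq_cons.1 heq
        have heq' : w ++ ws = α ++ [Letter.pred q ys false] ++ γ := by simpa using heq2
        cases hsub with
        | refl =>
            rcases split3 heq' with ⟨g₁, hww, rfl⟩ | ⟨a₂, hws, rfl⟩ |
              ⟨b₁, b₂, hb, hb₁, hb₂, hw, hws⟩
            · exfalso
              have hm : Sym.pn q ∈ T.syms := by
                have := pathsSyms h1 (Letter.pred q ys false) (by rw [hww]; simp)
                simpa [Letter.sym] using this
              exact hq'T' hm
            · have := Paths.loopTrue h1 (ih2 (Sub.refl _) hnd a₂ γ (by simpa using hws))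
              simpa [List.append_assoc] using this
            · exact absurd hb (fun hb => singleton_no_split hb hb₁ hb₂)
        | loop hs =>
            rcases split3 heq' with ⟨g₁, hww, rfl⟩ | ⟨a₂, hws, rfl⟩ |
              ⟨b₁, b₂, hb, hb₁, hb₂, hw, hws⟩
            · have := Paths.loopTrue (ih1 hs hndT' α g₁ (by simpa using hww)) h2
              simpa [List.append_assoc] using this
            · have := Paths.loopTrue h1 (ih2 (Sub.loop hs) hnd a₂ γ (by simpa using hws))
              simpa [List.append_assoc] using this
            · exact absurd hb (fun hb => singleton_no_split hb hb₁ hb₂)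

/-- Deleting one iteration of the loop preserves terminating paths. -/
lemma deleteLoop {q : Pn} {ys : List Var} {T : Schema} {μ : List Letter} (hμ : Paths T μ) :
    ∀ {S τ}, Paths S τ → Sub (Schema.loop q ys T) S → S.syms.Nodup →
    ∀ α γ, τ = α ++ (Letter.pred q ys true :: (μ ++ [Letter.pred q ys false])) ++ γ →
    Paths S (α ++ Letter.pred q ys false :: γ) := by
  have hbmem : ∀ m ∈ (Letter.pred q ys true :: (μ ++ [Letter.pred q ys false])),
      m.sym ∈ (Schema.loop q ys T).syms := by
    intro m hm
    rcases List.mem_cons.1 hm with rfl | hm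
    · simp [Schema.syms, Letter.sym]
    · rcases List.mem_append.1 hm with h | h
      · simp only [Schema.syms, List.mem_cons]
        exact Or.inr (pathsSyms hμ m h)
      · simp only [List.mem_singleton] at h
        subst h; simp [Schema.syms, Letter.sym]
  intro S τ h
  induction h with
  | skip => intro _ _ α γ heq; exact absurd heq (by simp)
  | label l =>
      intro _ _ α γ heq; exfalso
      rcases α with _ | ⟨x, α⟩ <;> simp_all
  | assign y f xs =>
      intro _ _ α γ heq; exfalso
      rcases α with _ | ⟨x, α⟩ <;> simp_all
  | seq h1 h2 ih1 ih2 =>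
      rename_i S₁ S₂ w₁ w₂
      intro hsub hnd α γ heq
      have hnd' : (S₁.syms ++ S₂.syms).Nodup := by simpa [Schema.syms] using hnd
      have hnd1 : S₁.syms.Nodup := hnd'.of_append_left
      have hnd2 : S₂.syms.Nodup := hnd'.of_append_right
      have hdisj : ∀ s, s ∈ S₁.syms → s ∈ S₂.syms → False :=
        fun s h1 h2 => (List.disjoint_of_nodup_append hnd') h1 h2
      cases hsub with
      | seqL hs =>
          rcases split3 heq with ⟨g₁, hww, rfl⟩ | ⟨a₂, hws, rfl⟩ |
            ⟨b₁, b₂, hb, hb₁, hb₂, hw, hws⟩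
          · have := Paths.seq (ih1 hs hnd1 α g₁ hww) h2
            simpa [List.append_assoc] using this
          · exfalso
            have hm1 : (Letter.pred q ys true).sym ∈ S₁.syms :=
              subSyms hs _ (hbmem _ (List.mem_cons_self))
            have hm2 : (Letter.pred q ys true).sym ∈ S₂.syms :=
              pathsSyms h2 _ (by rw [hws]; simp)
            exact hdisj _ hm1 hm2
          · exfalso
            rcases b₂ with _ | ⟨m, b₂'⟩
            · exact hb₂ rfl
            have hmB : m ∈ (Letter.pred q ys true :: (μ ++ [Letter.pred q ys false])) := by
              rw [hb]; exact List.mem_append.2 (Or.inr (List.mem_cons_self))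
            have hm1 : m.sym ∈ S₁.syms := subSyms hs _ (hbmem m hmB)
            have hm2 : m.sym ∈ S₂.syms := pathsSyms h2 m (by rw [hws]; simp)
            exact hdisj _ hm1 hm2
      | seqR hs =>
          rcases split3 heq with ⟨g₁, hww, rfl⟩ | ⟨a₂, hws, rfl⟩ |
            ⟨b₁, b₂, hb, hb₁, hb₂, hw, hws⟩
          · exfalso
            have hm1 : (Letter.pred q ys true).sym ∈ S₂.syms :=
              subSyms hs _ (hbmem _ (List.mem_cons_self))
            have hm2 : (Letter.pred q ys true).sym ∈ S₁.syms :=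
              pathsSyms h1 _ (by rw [hww]; simp)
            exact hdisj _ hm2 hm1
          · have := Paths.seq h1 (ih2 hs hnd2 a₂ γ hws)
            simpa [List.append_assoc] using this
          · exfalso
            rcases b₁ with _ | ⟨m, b₁'⟩
            · exact hb₁ rfl
            have hm : m = Letter.pred q ys true := ((List.cons_eq_cons.1 hb).1).symm
            subst hm
            have hm1 : (Letter.pred q ys true).sym ∈ S₂.syms :=
              subSyms hs _ (hbmem _ (List.mem_cons_self))
            have hm2 : (Letter.pred q ys true).sym ∈ S₁.syms :=
              pathsSyms h1 _ (by rw [hw]; simp)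
            exact hdisj _ hm2 hm1
  | iteTrue h1 ih =>
      rename_i p xs S₁ S₂ w
      intro hsub hnd α γ heq
      obtain ⟨hpnot, hnd12⟩ := List.nodup_cons.1 (show (Sym.pn p :: (S₁.syms ++ S₂.syms)).Nodup
        by simpa [Schema.syms] using hnd)
      have hnd1 : S₁.syms.Nodup := hnd12.of_append_left
      have hdisj : ∀ s, s ∈ S₁.syms → s ∈ S₂.syms → False :=
        fun s h1 h2 => (List.disjoint_of_nodup_append hnd12) h1 h2
      cases hsub with
      | iteT hs =>
          have hqS₁ : Sym.pn q ∈ S₁.syms := subSyms hs _ (by simp [Schema.syms])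
          rcases α with _ | ⟨x, α⟩
          · exfalso; simp only [List.nil_append, List.cons_append] at heq
            have h' := (List.cons_eq_cons.1 heq).1
            injection h' with e1 e2 e3
            subst e1
            exact hpnot (List.mem_append.2 (Or.inl hqS₁))
          · simp only [List.cons_append] at heq
            obtain ⟨rfl, heq2⟩ := List.cons_eq_cons.1 heq
            have := Paths.iteTrue (p := p) (xs := xs) (S₂ := S₂) (ih hs hnd1 α γ (by simpa using heq2))
            simpa using this
      | iteF hs =>
          have hqS₂ : Sym.pn q ∈ S₂.syms := subSyms hs _ (by simp [Schema.syms])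
          rcases α with _ | ⟨x, α⟩
          · exfalso; simp only [List.nil_append, List.cons_append] at heq
            have h' := (List.cons_eq_cons.1 heq).1
            injection h' with e1 e2 e3
            subst e1
            exact hpnot (List.mem_append.2 (Or.inr hqS₂))
          · exfalso
            simp only [List.cons_append] at heq
            obtain ⟨rfl, heq2⟩ := List.cons_eq_cons.1 heq
            have hm : (Letter.pred q ys true).sym ∈ S₁.syms :=
              pathsSyms h1 _ (by rw [show w = α ++ (Letter.pred q ys true ::
                (μ ++ [Letter.pred q ys false])) ++ γ by simpa using heq2]; simp)
            exact hdisj _ (by simpa [Letter.sym] using hm) hqS₂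
  | iteFalse h1 ih =>
      rename_i p xs S₁ S₂ w
      intro hsub hnd α γ heq
      obtain ⟨hpnot, hnd12⟩ := List.nodup_cons.1 (show (Sym.pn p :: (S₁.syms ++ S₂.syms)).Nodup
        by simpa [Schema.syms] using hnd)
      have hnd2 : S₂.syms.Nodup := hnd12.of_append_right
      have hdisj : ∀ s, s ∈ S₁.syms → s ∈ S₂.syms → False :=
        fun s h1 h2 => (List.disjoint_of_nodup_append hnd12) h1 h2
      cases hsub with
      | iteT hs =>
          have hqS₁ : Sym.pn q ∈ S₁.syms := subSyms hs _ (by simp [Schema.syms])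
          rcases α with _ | ⟨x, α⟩
          · exfalso; simp only [List.nil_append, List.cons_append] at heq
            have h' := (List.cons_eq_cons.1 heq).1
            injection h' with e1 e2 e3
            subst e1
            exact hpnot (List.mem_append.2 (Or.inl hqS₁))
          · exfalso
            simp only [List.cons_append] at heq
            obtain ⟨rfl, heq2⟩ := List.cons_eq_cons.1 heq
            have hm : (Letter.pred q ys true).sym ∈ S₂.syms :=
              pathsSyms h1 _ (by rw [show w = α ++ (Letter.pred q ys true ::
                (μ ++ [Letter.pred q ys false])) ++ γ by simpa using heq2]; simp)
            exact hdisj _ hqS₁ (by simpa [Letter.sym] using hm)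
      | iteF hs =>
          have hqS₂ : Sym.pn q ∈ S₂.syms := subSyms hs _ (by simp [Schema.syms])
          rcases α with _ | ⟨x, α⟩
          · exfalso; simp only [List.nil_append, List.cons_append] at heq
            have h' := (List.cons_eq_cons.1 heq).1
            injection h' with e1 e2 e3
            subst e1
            exact hpnot (List.mem_append.2 (Or.inr hqS₂))
          · simp only [List.cons_append] at heq
            obtain ⟨rfl, heq2⟩ := List.cons_eq_cons.1 heq
            have := Paths.iteFalse (p := p) (xs := xs) (S₁ := S₁) (ih hs hnd2 α γ (by simpa using heq2))
            simpa using this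
  | loopFalse q' xs' T' =>
      intro hsub hnd α γ heq
      exfalso
      rcases α with _ | ⟨x, α⟩
      · simp only [List.nil_append, List.cons_append] at heq
        have := (List.cons_eq_cons.1 heq).1; simp at this
      · simp only [List.cons_append] at heq
        have := (List.cons_eq_cons.1 heq).2; simp at this
  | loopTrue h1 h2 ih1 ih2 =>
      rename_i q' xs' T' w ws
      intro hsub hnd α γ heq
      obtain ⟨hq'T', hndT'⟩ := List.nodup_cons.1 (show (Sym.pn q' :: T'.syms).Nodup
        by simpa [Schema.syms] using hnd)
      rcases α with _ | ⟨x, α⟩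
      · simp only [List.nil_append, List.cons_append] at heq
        obtain ⟨h', heqw⟩ := List.cons_eq_cons.1 heq
        injection h' with e1 e2 e3
        subst e1; subst e2
        cases hsub with
        | refl =>
            have hcomp : w <+: μ ∨ μ <+: w := by
              apply List.prefix_or_prefix_of_prefix
                (l₃ := μ ++ (Letter.pred q' xs' false :: γ))
              · refine ⟨ws, ?_⟩
                rw [heqw]; simp
              · exact List.prefix_append _ _
            have hwμ : w = μ := prefixFree _ w μ h1 hμ hcomp
            subst hwμ
            have hws' : ws = Letter.pred q' xs' false :: γ := by
              have h3 : w ++ ws = w ++ (Letter.pred q' xs' false :: γ) := by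
                rw [heqw]; simp
              exact List.append_cancel_left h3
            simpa [hws'.symm] using h2
        | loop hs =>
            exfalso
            exact hq'T' (subSyms hs _ (show Sym.pn q' ∈ (Schema.loop q' xs' T).syms by
              simp [Schema.syms]))
      · simp only [List.cons_append] at heq
        obtain ⟨rfl, heq2⟩ := List.cons_eq_cons.1 heq
        cases hsub with
        | refl =>
            rcases split3 heq2 with ⟨g₁, hww, rfl⟩ | ⟨a₂, hws, rfl⟩ |
              ⟨b₁, b₂, hb, hb₁, hb₂, hw, hws⟩
            · exfalso
              have hm : Sym.pn q ∈ T.syms := by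
                have := pathsSyms h1 (Letter.pred q ys true) (by rw [hww]; simp)
                simpa [Letter.sym] using this
              exact hq'T' hm
            · have := Paths.loopTrue h1 (ih2 (Sub.refl _) hnd a₂ γ hws)
              simpa [List.append_assoc] using this
            · exfalso
              rcases b₁ with _ | ⟨m, b₁'⟩
              · exact hb₁ rfl
              have hm : m = Letter.pred q ys true := ((List.cons_eq_cons.1 hb).1).symm
              subst hm
              have hmem : Sym.pn q ∈ T.syms := by
                have := pathsSyms h1 (Letter.pred q ys true) (by rw [hw]; simp)
                simpa [Letter.sym] using this
              exact hq'T' hmem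
        | loop hs =>
            rcases split3 heq2 with ⟨g₁, hww, rfl⟩ | ⟨a₂, hws, rfl⟩ |
              ⟨b₁, b₂, hb, hb₁, hb₂, hw, hws⟩
            · have := Paths.loopTrue (ih1 hs hndT' α g₁ hww) h2
              simpa [List.append_assoc] using this
            · have := Paths.loopTrue h1 (ih2 (Sub.loop hs) hnd a₂ γ hws)
              simpa [List.append_assoc] using this
            · exfalso
              rcases b₂ with _ | ⟨m, b₂'⟩
              · exact hb₂ rfl
              have hmB : m ∈ (Letter.pred q ys true :: (μ ++ [Letter.pred q ys false])) := by
                rw [hb]; exact List.mem_append.2 (Or.inr (List.mem_cons_self))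
              have hmT' : m.sym ∈ T'.syms := subSyms hs _ (hbmem m hmB)
              cases h2 with
              | loopFalse =>
                  have := (List.cons_eq_cons.1 hws).1
                  subst this
                  exact hq'T' (by simpa [Letter.sym] using hmT')
              | loopTrue hv hws2 =>
                  have := (List.cons_eq_cons.1 hws).1
                  subst this
                  exact hq'T' (by simpa [Letter.sym] using hmT')

/-- Proposition 4.1(1) / substitute.prop: for a while predicate q of a
    linear schema S with body T and a terminating path μ through T, a word
    α⟨q,true⟩μ⟨q,false⟩γ is a path through S iff α⟨q,false⟩γ is, and one is a
    terminating path through S iff the other is. -/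
theorem statement_7 (S : Schema) (hlin : S.Linear) (q : Pn) (ys : List Var) (T : Schema)
    (hsub : Sub (Schema.loop q ys T) S) (μ : List Letter) (hμ : Paths T μ)
    (α γ : List Letter) :
    (PathPrefix S (α ++ [Letter.pred q ys true] ++ μ ++ [Letter.pred q ys false] ++ γ) ↔
      PathPrefix S (α ++ [Letter.pred q ys false] ++ γ)) ∧
    (Paths S (α ++ [Letter.pred q ys true] ++ μ ++ [Letter.pred q ys false] ++ γ) ↔
      Paths S (α ++ [Letter.pred q ys false] ++ γ)) := by
  have hnd : S.syms.Nodup := hlin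
  constructor
  · constructor
    · rintro ⟨τ, hτ, δ, rfl⟩
      refine ⟨α ++ Letter.pred q ys false :: (γ ++ δ), ?_, δ, by simp⟩
      exact deleteLoop hμ hτ hsub hnd α (γ ++ δ) (by simp)
    · rintro ⟨τ, hτ, δ, rfl⟩
      refine ⟨α ++ Letter.pred q ys true :: (μ ++ Letter.pred q ys false :: (γ ++ δ)),
        ?_, δ, by simp⟩
      exact insertLoop hμ hτ hsub hnd α (γ ++ δ) (by simp)
  · constructor
    · intro h
      have := deleteLoop hμ h hsub hnd α γ (by simp)
      simpa using this
    · intro h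
      have := insertLoop hμ h hsub hnd α γ (by simp)
      simpa using this

end SchemaSlicing
end

section
/- Let S be a linear schema, let q be an if predicate in S with Z-part S_Z and ¬Z-part S_{¬Z} for Z ∈ {true,false}, and let μ ∈ Π(S_Z), μ' ∈ Π(S_{¬Z}) be terminating paths in the Z-part and ¬Z-part of q respectively. Then for any words α, γ: the word α⟨q,Z⟩μγ is a path through S if and only if α⟨q,¬Z⟩μ'γ is a path through S; moreover one of these is a terminating path through S if and only if the other is. -/
namespace SchemaSlicing

/-- Every letter on a terminating path of `T` has its symbol in `T.syms`. -/
lemma paths_sym_mem {T : Schema} {w : List Letter} (h : Paths T w) :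
    ∀ m ∈ w, m.sym ∈ T.syms := by
  induction h with
  | skip => simp
  | label l => simp [Letter.sym, Schema.syms]
  | assign y f xs => simp [Letter.sym, Schema.syms]
  | seq h1 h2 ih1 ih2 =>
    intro m hm
    rcases List.mem_append.1 hm with h | h
    · exact List.mem_append.2 (Or.inl (ih1 m h))
    · exact List.mem_append.2 (Or.inr (ih2 m h))
  | iteTrue h ih =>
    intro m hm
    rcases List.mem_cons.1 hm with rfl | h
    · simp [Letter.sym, Schema.syms]
    · exact List.mem_cons.2 (Or.inr (List.mem_append.2 (Or.inl (ih m h))))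
  | iteFalse h ih =>
    intro m hm
    rcases List.mem_cons.1 hm with rfl | h
    · simp [Letter.sym, Schema.syms]
    · exact List.mem_cons.2 (Or.inr (List.mem_append.2 (Or.inr (ih m h))))
  | loopFalse q xs T =>
    intro m hm
    rcases List.mem_singleton.1 hm with rfl
    simp [Letter.sym, Schema.syms]
  | loopTrue h1 h2 ih1 ih2 =>
    intro m hm
    rcases List.mem_cons.1 hm with rfl | h
    · simp [Letter.sym, Schema.syms]
    · rcases List.mem_append.1 h with h | h
      · exact List.mem_cons.2 (Or.inr (ih1 m h))
      · exact ih2 m h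

/-- The symbols of a subschema occur in the schema. -/
lemma sub_syms_subset {T S : Schema} (h : Sub T S) : T.syms ⊆ S.syms := by
  induction h with
  | refl => exact fun s hs => hs
  | seqL h ih => intro s hs; exact List.mem_append.2 (Or.inl (ih hs))
  | seqR h ih => intro s hs; exact List.mem_append.2 (Or.inr (ih hs))
  | iteT h ih => intro s hs; exact List.mem_cons.2 (Or.inr (List.mem_append.2 (Or.inl (ih hs))))
  | iteF h ih => intro s hs; exact List.mem_cons.2 (Or.inr (List.mem_append.2 (Or.inr (ih hs))))
  | loop h ih => intro s hs; exact List.mem_cons.2 (Or.inr (ih hs))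

lemma comparable_of_append {a b c d : List Letter}
    (h : a ++ b <+: c ++ d ∨ c ++ d <+: a ++ b) : a <+: c ∨ c <+: a := by
  rcases h with h | h
  · exact List.prefix_or_prefix_of_prefix
      (((a.prefix_append b).trans h)) (c.prefix_append d)
  · exact List.prefix_or_prefix_of_prefix
      (a.prefix_append b) ((c.prefix_append d).trans h)

/-- Π(T) is a "comparability-free" set: comparable terminating paths are equal. -/
lemma paths_comparable_eq {T : Schema} {w : List Letter} (hw : Paths T w) :
    ∀ v, Paths T v → (v <+: w ∨ w <+: v) → v = w := by
  induction hw with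
  | skip => intro v hv _; cases hv; rfl
  | label l => intro v hv _; cases hv; rfl
  | assign y f xs => intro v hv _; cases hv; rfl
  | @seq S₁ S₂ w₁ w₂ h1 h2 ih1 ih2 =>
    intro v hv hcomp
    cases hv with
    | @seq _ _ v₁ v₂ hv1 hv2 =>
      have e1 : v₁ = w₁ := ih1 v₁ hv1 (comparable_of_append hcomp)
      subst e1
      have hcomp2 : v₂ <+: w₂ ∨ w₂ <+: v₂ := by
        rcases hcomp with h | h
        · exact Or.inl ((List.prefix_append_right_inj v₁).1 h)
        · exact Or.inr ((List.prefix_append_right_inj v₁).1 h)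
      rw [ih2 v₂ hv2 hcomp2]
  | @iteTrue p xs S₁ S₂ w h ih =>
    intro v hv hcomp
    cases hv with
    | @iteTrue _ _ _ _ v' hv1 =>
      have hcomp2 : v' <+: w ∨ w <+: v' := by
        rcases hcomp with h' | h'
        · exact Or.inl (List.cons_prefix_cons.1 h').2
        · exact Or.inr (List.cons_prefix_cons.1 h').2
      rw [ih _ hv1 hcomp2]
    | iteFalse hv1 =>
      exfalso
      rcases hcomp with h' | h' <;> simpa using (List.cons_prefix_cons.1 h').1
  | @iteFalse p xs S₁ S₂ w h ih =>
    intro v hv hcomp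
    cases hv with
    | @iteFalse _ _ _ _ v' hv1 =>
      have hcomp2 : v' <+: w ∨ w <+: v' := by
        rcases hcomp with h' | h'
        · exact Or.inl (List.cons_prefix_cons.1 h').2
        · exact Or.inr (List.cons_prefix_cons.1 h').2
      rw [ih _ hv1 hcomp2]
    | iteTrue hv1 =>
      exfalso
      rcases hcomp with h' | h' <;> simpa using (List.cons_prefix_cons.1 h').1
  | loopFalse q xs T =>
    intro v hv hcomp
    cases hv with
    | loopFalse => rfl
    | loopTrue hv1 hv2 =>
      exfalso
      rcases hcomp with h' | h' <;> simpa using (List.cons_prefix_cons.1 h').1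
  | @loopTrue q xs T w ws h1 h2 ih1 ih2 =>
    intro v hv hcomp
    cases hv with
    | loopFalse =>
      exfalso
      rcases hcomp with h' | h' <;> simpa using (List.cons_prefix_cons.1 h').1
    | @loopTrue _ _ _ v₁ vs hv1 hv2 =>
      have hcomp1 : v₁ ++ vs <+: w ++ ws ∨ w ++ ws <+: v₁ ++ vs := by
        rcases hcomp with h' | h'
        · exact Or.inl (List.cons_prefix_cons.1 h').2
        · exact Or.inr (List.cons_prefix_cons.1 h').2
      have e1 : v₁ = w := ih1 v₁ hv1 (comparable_of_append hcomp1)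
      subst e1
      have hcomp2 : vs <+: ws ∨ ws <+: vs := by
        rcases hcomp1 with h' | h'
        · exact Or.inl ((List.prefix_append_right_inj v₁).1 h')
        · exact Or.inr ((List.prefix_append_right_inj v₁).1 h')
      rw [ih2 vs hv2 hcomp2]

/-- Splitting an append around a distinguished letter occurrence. -/
lemma append_split {w₁ w₂ α t : List Letter} {x : Letter}
    (h : w₁ ++ w₂ = α ++ x :: t) :
    (∃ t₁, w₁ = α ++ x :: t₁ ∧ t = t₁ ++ w₂) ∨
    (∃ α₂, α = w₁ ++ α₂ ∧ w₂ = α₂ ++ x :: t) := by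
  rcases List.append_eq_append_iff.1 h with ⟨a', ha1, ha2⟩ | ⟨c', hc1, hc2⟩
  · exact Or.inr ⟨a', ha1, ha2⟩
  · cases c' with
    | nil =>
      refine Or.inr ⟨[], by simpa using hc1.symm, by simpa using hc2.symm⟩
    | cons y c'' =>
      obtain ⟨rfl, ht⟩ : x = y ∧ t = c'' ++ w₂ := by
        have := hc2
        simp at this
        exact ⟨this.1, this.2⟩
      exact Or.inl ⟨c'', by simpa using hc1, ht⟩

/-- Key substitution lemma: in a terminating path of a linear schema `S`, the
    segment following an occurrence of the predicate letter of an if subschema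
    is a terminating path of the corresponding branch followed by a remainder,
    and that branch path may be replaced by any terminating path of either
    branch (flipping the predicate letter accordingly). -/
lemma substitute_aux {q : Pn} {ys : List Var} {S₁ S₂ : Schema} {Z : Bool} :
    ∀ {S : Schema} {w : List Letter}, Paths S w → S.Linear →
    Sub (Schema.ite q ys S₁ S₂) S →
    ∀ {α t : List Letter}, w = α ++ Letter.pred q ys Z :: t →
    ∃ ν δ, t = ν ++ δ ∧ Paths (if Z then S₁ else S₂) ν ∧
      ∀ (Z' : Bool) (ν' : List Letter), Paths (if Z' then S₁ else S₂) ν' →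
        Paths S (α ++ Letter.pred q ys Z' :: (ν' ++ δ)) := by
  intro S w hw
  induction hw with
  | skip =>
    intro _ _ α t heq
    exact absurd heq (by simp)
  | label l =>
    intro _ _ α t heq
    have : Letter.pred q ys Z ∈ [Letter.lab l] := by rw [heq]; simp
    simp at this
  | assign y f xs =>
    intro _ _ α t heq
    have : Letter.pred q ys Z ∈ [Letter.asgn y f xs] := by rw [heq]; simp
    simp at this
  | @seq T₁ T₂ w₁ w₂ h1 h2 ih1 ih2 =>
    intro hlin hsub α t heq
    have hnd := hlin
    rw [Schema.Linear, Schema.syms, List.nodup_append] at hnd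
    obtain ⟨hnd1, hnd2, hdisj⟩ := hnd
    rcases append_split heq with ⟨t₁, hw1, ht⟩ | ⟨α₂, hα, hw2⟩
    · -- the occurrence is in w₁
      have hq1 : Sym.pn q ∈ T₁.syms := by
        have := paths_sym_mem h1 (Letter.pred q ys Z) (by rw [hw1]; simp)
        simpa [Letter.sym] using this
      have hsub1 : Sub (Schema.ite q ys S₁ S₂) T₁ := by
        cases hsub with
        | seqL h => exact h
        | seqR h =>
          exact absurd hq1 (fun hmem =>
            hdisj (Sym.pn q) hmem (Sym.pn q) (sub_syms_subset h (by simp [Schema.syms])) rfl)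
      obtain ⟨ν, δ₁, hsplit, hν, hrepl⟩ := ih1 hnd1 hsub1 hw1
      refine ⟨ν, δ₁ ++ w₂, by rw [ht, hsplit, List.append_assoc], hν, ?_⟩
      intro Z' ν' hν'
      have := Paths.seq (hrepl Z' ν' hν') h2
      simpa [List.append_assoc] using this
    · -- the occurrence is in w₂
      have hq2 : Sym.pn q ∈ T₂.syms := by
        have := paths_sym_mem h2 (Letter.pred q ys Z) (by rw [hw2]; simp)
        simpa [Letter.sym] using this
      have hsub2 : Sub (Schema.ite q ys S₁ S₂) T₂ := by
        cases hsub with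
        | seqR h => exact h
        | seqL h =>
          exact absurd hq2 (fun hmem =>
            hdisj (Sym.pn q) (sub_syms_subset h (by simp [Schema.syms])) (Sym.pn q) hmem rfl)
      obtain ⟨ν, δ, hsplit, hν, hrepl⟩ := ih2 hnd2 hsub2 hw2
      refine ⟨ν, δ, hsplit, hν, ?_⟩
      intro Z' ν' hν'
      have := Paths.seq h1 (hrepl Z' ν' hν')
      simpa [hα, List.append_assoc] using this
  | @iteTrue p xs T₁ T₂ w h ih =>
    intro hlin hsub α t heq
    have hnd := hlin
    rw [Schema.Linear, Schema.syms, List.nodup_cons] at hnd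
    obtain ⟨hpnotin, hnd'⟩ := hnd
    rw [List.nodup_append] at hnd'
    obtain ⟨hnd1, hnd2, hdisj⟩ := hnd'
    cases α with
    | nil =>
      simp only [List.nil_append, List.cons.injEq] at heq
      obtain ⟨hx, rfl⟩ := heq
      obtain ⟨hpq, hxy, hZ⟩ := Letter.pred.inj hx
      cases hsub with
      | refl =>
        obtain rfl := hZ.symm
        refine ⟨w, [], by simp, by simpa using h, ?_⟩
        intro Z' ν' hν'
        cases Z' with
        | true => simpa using Paths.iteTrue (S₂ := S₂) (by simpa using hν')
        | false => simpa using Paths.iteFalse (S₁ := S₁) (by simpa using hν')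
      | iteT hs =>
        subst hpq
        exact absurd (sub_syms_subset hs (by simp [Schema.syms]))
          (fun hmem => hpnotin (List.mem_append.2 (Or.inl hmem)))
      | iteF hs =>
        subst hpq
        exact absurd (sub_syms_subset hs (by simp [Schema.syms]))
          (fun hmem => hpnotin (List.mem_append.2 (Or.inr hmem)))
    | cons a α' =>
      simp only [List.cons_append, List.cons.injEq] at heq
      obtain ⟨rfl, hw⟩ := heq
      have hq1 : Sym.pn q ∈ T₁.syms := by
        have := paths_sym_mem h (Letter.pred q ys Z) (by rw [hw]; simp)
        simpa [Letter.sym] using this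
      have hsub1 : Sub (Schema.ite q ys S₁ S₂) T₁ := by
        cases hsub with
        | refl => exact absurd hq1 (fun hmem =>
            hpnotin (List.mem_append.2 (Or.inl hmem)))
        | iteT hs => exact hs
        | iteF hs =>
          exact absurd hq1 (fun hmem =>
            hdisj (Sym.pn q) hmem (Sym.pn q) (sub_syms_subset hs (by simp [Schema.syms])) rfl)
      obtain ⟨ν, δ, hsplit, hν, hrepl⟩ := ih hnd1 hsub1 hw
      refine ⟨ν, δ, hsplit, hν, ?_⟩
      intro Z' ν' hν'
      simpa using Paths.iteTrue (hrepl Z' ν' hν')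
  | @iteFalse p xs T₁ T₂ w h ih =>
    intro hlin hsub α t heq
    have hnd := hlin
    rw [Schema.Linear, Schema.syms, List.nodup_cons] at hnd
    obtain ⟨hpnotin, hnd'⟩ := hnd
    rw [List.nodup_append] at hnd'
    obtain ⟨hnd1, hnd2, hdisj⟩ := hnd'
    cases α with
    | nil =>
      simp only [List.nil_append, List.cons.injEq] at heq
      obtain ⟨hx, rfl⟩ := heq
      obtain ⟨hpq, hxy, hZ⟩ := Letter.pred.inj hx
      cases hsub with
      | refl =>
        obtain rfl := hZ.symm
        refine ⟨w, [], by simp, by simpa using h, ?_⟩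
        intro Z' ν' hν'
        cases Z' with
        | true => simpa using Paths.iteTrue (S₂ := S₂) (by simpa using hν')
        | false => simpa using Paths.iteFalse (S₁ := S₁) (by simpa using hν')
      | iteT hs =>
        subst hpq
        exact absurd (sub_syms_subset hs (by simp [Schema.syms]))
          (fun hmem => hpnotin (List.mem_append.2 (Or.inl hmem)))
      | iteF hs =>
        subst hpq
        exact absurd (sub_syms_subset hs (by simp [Schema.syms]))
          (fun hmem => hpnotin (List.mem_append.2 (Or.inr hmem)))
    | cons a α' =>
      simp only [List.cons_append, List.cons.injEq] at heq
      obtain ⟨rfl, hw⟩ := heq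
      have hq2 : Sym.pn q ∈ T₂.syms := by
        have := paths_sym_mem h (Letter.pred q ys Z) (by rw [hw]; simp)
        simpa [Letter.sym] using this
      have hsub2 : Sub (Schema.ite q ys S₁ S₂) T₂ := by
        cases hsub with
        | refl => exact absurd hq2 (fun hmem =>
            hpnotin (List.mem_append.2 (Or.inr hmem)))
        | iteF hs => exact hs
        | iteT hs =>
          exact absurd hq2 (fun hmem =>
            hdisj (Sym.pn q) (sub_syms_subset hs (by simp [Schema.syms])) (Sym.pn q) hmem rfl)
      obtain ⟨ν, δ, hsplit, hν, hrepl⟩ := ih hnd2 hsub2 hw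
      refine ⟨ν, δ, hsplit, hν, ?_⟩
      intro Z' ν' hν'
      simpa using Paths.iteFalse (hrepl Z' ν' hν')
  | loopFalse p xs B =>
    intro hlin hsub α t heq
    have hnd := hlin
    rw [Schema.Linear, Schema.syms, List.nodup_cons] at hnd
    cases α with
    | nil =>
      simp only [List.nil_append, List.cons.injEq] at heq
      obtain ⟨hx, rfl⟩ := heq
      obtain ⟨hpq, hxy, hZ⟩ := Letter.pred.inj hx
      exfalso
      cases hsub with
      | loop hs =>
        subst hpq
        exact hnd.1 (sub_syms_subset hs (by simp [Schema.syms]))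
    | cons a α' =>
      simp only [List.cons_append, List.cons.injEq] at heq
      exact absurd heq.2 (by simp)
  | @loopTrue p xs B w ws h1 h2 ih1 ih2 =>
    intro hlin hsub α t heq
    have hnd := hlin
    rw [Schema.Linear, Schema.syms, List.nodup_cons] at hnd
    obtain ⟨hpnotin, hndB⟩ := hnd
    have hsubB : Sub (Schema.ite q ys S₁ S₂) B := by
      cases hsub with
      | loop hs => exact hs
    cases α with
    | nil =>
      simp only [List.nil_append, List.cons.injEq] at heq
      obtain ⟨hx, rfl⟩ := heq
      obtain ⟨hpq, hxy, hZ⟩ := Letter.pred.inj hx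
      subst hpq
      exact absurd (sub_syms_subset hsubB (by simp [Schema.syms])) hpnotin
    | cons a α' =>
      simp only [List.cons_append, List.cons.injEq] at heq
      obtain ⟨rfl, hw⟩ := heq
      rcases append_split hw with ⟨t₁, hw1, ht⟩ | ⟨α₂, hα, hw2⟩
      · obtain ⟨ν, δ₁, hsplit, hν, hrepl⟩ := ih1 hndB hsubB hw1
        refine ⟨ν, δ₁ ++ ws, by rw [ht, hsplit, List.append_assoc], hν, ?_⟩
        intro Z' ν' hν'
        have := Paths.loopTrue (hrepl Z' ν' hν') h2
        simpa [List.append_assoc] using this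
      · obtain ⟨ν, δ, hsplit, hν, hrepl⟩ :=
          ih2 (by rw [Schema.Linear, Schema.syms, List.nodup_cons]; exact ⟨hpnotin, hndB⟩)
            hsub hw2
        refine ⟨ν, δ, hsplit, hν, ?_⟩
        intro Z' ν' hν'
        have := Paths.loopTrue h1 (hrepl Z' ν' hν')
        simpa [hα, List.append_assoc] using this

/-- One direction of the substitution theorem for terminating paths. -/
lemma substitute_paths {S : Schema} (hlin : S.Linear) {q : Pn} {ys : List Var}
    {S₁ S₂ : Schema} (hsub : Sub (Schema.ite q ys S₁ S₂) S) {Z : Bool}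
    {μ μ' : List Letter}
    (hμ : Paths (if Z then S₁ else S₂) μ) (hμ' : Paths (if Z then S₂ else S₁) μ')
    (α γ : List Letter)
    (h : Paths S (α ++ Letter.pred q ys Z :: (μ ++ γ))) :
    Paths S (α ++ Letter.pred q ys (!Z) :: (μ' ++ γ)) := by
  obtain ⟨ν, δ, hsplit, hν, hrepl⟩ := substitute_aux h hlin hsub rfl
  have hcomp : μ <+: ν ∨ ν <+: μ := by
    refine List.prefix_or_prefix_of_prefix (l₃ := μ ++ γ) (μ.prefix_append γ) ?_
    rw [hsplit]; exact ν.prefix_append δ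
  have : μ = ν := paths_comparable_eq hν μ hμ hcomp
  subst this
  have hγ : γ = δ := by
    have := hsplit
    exact List.append_cancel_left this
  subst hγ
  have hμ'' : Paths (if !Z then S₁ else S₂) μ' := by cases Z <;> simpa using hμ'
  exact hrepl (!Z) μ' hμ''

/-- Proposition 4.1(2) / substitute.prop: for an if predicate q of a linear
    schema S with Z-part and ¬Z-part, and terminating paths μ, μ' through the Z-part and
    ¬Z-part respectively, α⟨q,Z⟩μγ is a path through S iff α⟨q,¬Z⟩μ'γ is, and one is a
    terminating path through S iff the other is. -/
theorem statement_8 (S : Schema) (hlin : S.Linear) (q : Pn) (ys : List Var)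
    (S₁ S₂ : Schema) (hsub : Sub (Schema.ite q ys S₁ S₂) S) (Z : Bool)
    (μ μ' : List Letter)
    (hμ : Paths (if Z then S₁ else S₂) μ) (hμ' : Paths (if Z then S₂ else S₁) μ')
    (α γ : List Letter) :
    (PathPrefix S (α ++ [Letter.pred q ys Z] ++ μ ++ γ) ↔
      PathPrefix S (α ++ [Letter.pred q ys (!Z)] ++ μ' ++ γ)) ∧
    (Paths S (α ++ [Letter.pred q ys Z] ++ μ ++ γ) ↔
      Paths S (α ++ [Letter.pred q ys (!Z)] ++ μ' ++ γ)) := by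
  have hμ₂ : Paths (if !Z then S₁ else S₂) μ' := by cases Z <;> simpa using hμ'
  have hμ₂' : Paths (if !Z then S₂ else S₁) μ := by cases Z <;> simpa using hμ
  have key : ∀ γ' : List Letter,
      Paths S (α ++ Letter.pred q ys Z :: (μ ++ γ')) →
      Paths S (α ++ Letter.pred q ys (!Z) :: (μ' ++ γ')) :=
    fun γ' h => substitute_paths hlin hsub hμ hμ' α γ' h
  have key' : ∀ γ' : List Letter,
      Paths S (α ++ Letter.pred q ys (!Z) :: (μ' ++ γ')) →
      Paths S (α ++ Letter.pred q ys Z :: (μ ++ γ')) := by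
    intro γ' h
    have := substitute_paths hlin hsub hμ₂ hμ₂' α γ' h
    simpa using this
  constructor
  · constructor
    · rintro ⟨τ, hτ, δ, rfl⟩
      have h2 : Paths S (α ++ Letter.pred q ys Z :: (μ ++ (γ ++ δ))) := by
        simpa [List.append_assoc] using hτ
      exact ⟨_, key (γ ++ δ) h2, δ, by simp⟩
    · rintro ⟨τ, hτ, δ, rfl⟩
      have h2 : Paths S (α ++ Letter.pred q ys (!Z) :: (μ' ++ (γ ++ δ))) := by
        simpa [List.append_assoc] using hτ
      exact ⟨_, key' (γ ++ δ) h2, δ, by simp⟩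
  · constructor
    · intro h
      have := key γ (by simpa [List.append_assoc] using h)
      simpa [List.append_assoc] using this
    · intro h
      have := key' γ (by simpa [List.append_assoc] using h)
      simpa [List.append_assoc] using this

end SchemaSlicing
end
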